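/- arXiv:2105.08344 — 8 statements merged into one kernel-verified Lean document; each statement's English description precedes it below -/
import Mathlib

section
/- The set of bounded directions B(U) := {ξ ∈ S^{N-1} : liminf_{τ→+∞} dist(τξ, U)/τ > 0} is an open subset of the unit sphere S^{N-1}. -/
open Filter Metric Topology

/-- The set of bounded directions
`B(U) = {ξ ∈ S^{N-1} : liminf_{τ→+∞} dist(τξ, U)/τ > 0}` is an open subset of the
unit sphere `S^{N-1}`. -/
theorem boundedDirections_isOpen (N : ℕ) (hN : 1 ≤ N)
    (U : Set (EuclideanSpace ℝ (Fin N))) (hU : U.Nonempty) :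
    IsOpen {ξ : Metric.sphere (0 : EuclideanSpace ℝ (Fin N)) 1 |
      0 < Filter.liminf
        (fun τ : ℝ => Metric.infDist (τ • (ξ : EuclideanSpace ℝ (Fin N))) U / τ)
        Filter.atTop} := by
  rw [Metric.isOpen_iff]
  intro ξ hξ
  simp only [Set.mem_setOf_eq] at hξ
  obtain ⟨a, ha0, haL⟩ := exists_between hξ
  have hbdd : IsBoundedUnder (· ≥ ·) atTop
      (fun τ : ℝ => Metric.infDist (τ • (ξ : EuclideanSpace ℝ (Fin N))) U / τ) := by
    refine isBoundedUnder_of_eventually_ge (a := 0) ?_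
    filter_upwards [eventually_gt_atTop (0:ℝ)] with τ hτ
    exact div_nonneg Metric.infDist_nonneg hτ.le
  have hev : ∀ᶠ τ in atTop, a <
      Metric.infDist (τ • (ξ : EuclideanSpace ℝ (Fin N))) U / τ :=
    eventually_lt_of_lt_liminf haL hbdd
  refine ⟨a / 2, by linarith, fun η hη => ?_⟩
  simp only [Set.mem_setOf_eq]
  have hd : dist (ξ : EuclideanSpace ℝ (Fin N)) (η : EuclideanSpace ℝ (Fin N)) < a / 2 := by
    rw [dist_comm, ← Subtype.dist_eq]
    exact mem_ball.1 hη
  have hev2 : ∀ᶠ τ in atTop, a / 2 ≤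
      Metric.infDist (τ • (η : EuclideanSpace ℝ (Fin N))) U / τ := by
    filter_upwards [hev, eventually_gt_atTop (0:ℝ)] with τ hτ hτ0
    set x := (ξ : EuclideanSpace ℝ (Fin N))
    set y := (η : EuclideanSpace ℝ (Fin N))
    have h1 : Metric.infDist (τ • x) U ≤ Metric.infDist (τ • y) U + dist (τ • x) (τ • y) :=
      Metric.infDist_le_infDist_add_dist
    have h2 : dist (τ • x) (τ • y) = τ * dist x y := by
      rw [dist_smul₀, Real.norm_eq_abs, abs_of_pos hτ0]
    have h3 : Metric.infDist (τ • x) U / τ ≤ (Metric.infDist (τ • y) U + τ * dist x y) / τ :=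
      (div_le_div_iff_of_pos_right hτ0).2 (by linarith)
    have h4 : (Metric.infDist (τ • y) U + τ * dist x y) / τ
        = Metric.infDist (τ • y) U / τ + dist x y := by
      field_simp
    rw [h4] at h3
    linarith
  obtain ⟨u0, hu0⟩ := hU
  have hub : IsBoundedUnder (· ≤ ·) atTop
      (fun τ : ℝ => Metric.infDist (τ • (η : EuclideanSpace ℝ (Fin N))) U / τ) := by
    refine isBoundedUnder_of_eventually_le (a := 1 + ‖u0‖) ?_
    filter_upwards [eventually_ge_atTop (1:ℝ)] with τ hτ
    have hτ0 : (0:ℝ) < τ := by linarith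
    have hη1 : ‖(η : EuclideanSpace ℝ (Fin N))‖ = 1 := by
      simpa using mem_sphere_zero_iff_norm.1 η.2
    have h1 : Metric.infDist (τ • (η : EuclideanSpace ℝ (Fin N))) U ≤ τ + ‖u0‖ := by
      calc Metric.infDist (τ • (η : EuclideanSpace ℝ (Fin N))) U
          ≤ dist (τ • (η : EuclideanSpace ℝ (Fin N))) u0 := Metric.infDist_le_dist_of_mem hu0
        _ ≤ ‖τ • (η : EuclideanSpace ℝ (Fin N))‖ + ‖u0‖ := by
            simpa [dist_eq_norm] using norm_sub_le (τ • (η : EuclideanSpace ℝ (Fin N))) u0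
        _ = τ + ‖u0‖ := by rw [norm_smul, hη1, Real.norm_eq_abs, abs_of_pos hτ0]; ring
    calc Metric.infDist (τ • (η : EuclideanSpace ℝ (Fin N))) U / τ
        ≤ (τ + ‖u0‖) / τ := (div_le_div_iff_of_pos_right hτ0).2 h1
      _ = 1 + ‖u0‖ / τ := by field_simp
      _ ≤ 1 + ‖u0‖ := by
          have h5 : ‖u0‖ / τ ≤ ‖u0‖ / 1 :=
            div_le_div_of_nonneg_left (norm_nonneg _) one_pos hτ
          simp only [div_one] at h5
          linarith
  have hcob : IsCoboundedUnder (· ≥ ·) atTop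
      (fun τ : ℝ => Metric.infDist (τ • (η : EuclideanSpace ℝ (Fin N))) U / τ) :=
    hub.isCoboundedUnder_flip
  calc (0:ℝ) < a / 2 := by linarith
    _ ≤ _ := le_liminf_of_le hcob hev2
end

section
/- Let U, U' ⊆ ℝ^N be nonempty sets such that d_H(U ∩ B_R, U' ∩ B_R)/R → 0 as R → +∞. Then B(U) = B(U') and U(U) = U(U'). -/
open Filter Metric Topology

/-- Key estimate: one-sided comparison of `infDist` along the ray, up to `ε * τ`. -/
lemma key_infDist_le {N : ℕ} (ξ : EuclideanSpace ℝ (Fin N))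
    (U U' : Set (EuclideanSpace ℝ (Fin N))) (hU : U.Nonempty)
    (h : ∀ ε : ℝ, 0 < ε → ∃ R₀ : ℝ, ∀ R : ℝ, R₀ ≤ R →
      EMetric.hausdorffEdist (U ∩ Metric.ball 0 R) (U' ∩ Metric.ball 0 R)
        ≤ ENNReal.ofReal (ε * R))
    (hξ : ‖ξ‖ = 1) (ε : ℝ) (hε : 0 < ε) :
    ∀ᶠ τ : ℝ in atTop, Metric.infDist (τ • ξ) U' ≤ Metric.infDist (τ • ξ) U + ε * τ := by
  obtain ⟨u₀, hu₀⟩ := hU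
  obtain ⟨R₀, hR₀⟩ := h (ε / 8) (by linarith)
  have hmem : ∀ᶠ τ : ℝ in atTop,
      max (max (R₀ / 4) (‖u₀‖ + 1)) (max 1 (2 / ε)) ≤ τ := eventually_ge_atTop _
  filter_upwards [hmem] with τ hτ
  have hτ1 : (1 : ℝ) ≤ τ := le_trans (le_max_left _ _) (le_trans (le_max_right _ _) hτ)
  have hτ0 : (0 : ℝ) < τ := lt_of_lt_of_le one_pos hτ1
  have hτu₀ : ‖u₀‖ + 1 ≤ τ := le_trans (le_max_right _ _) (le_trans (le_max_left _ _) hτ)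
  have hτR₀ : R₀ / 4 ≤ τ := le_trans (le_max_left _ _) (le_trans (le_max_left _ _) hτ)
  have hτε : 2 / ε ≤ τ := le_trans (le_max_right _ _) (le_trans (le_max_right _ _) hτ)
  have hετ : 1 ≤ ε * τ / 2 := by
    rw [div_le_iff₀ hε] at hτε
    linarith
  set R : ℝ := 4 * τ with hR
  have hRR₀ : R₀ ≤ R := by rw [hR]; linarith
  have hnorm : ‖τ • ξ‖ = τ := by
    rw [norm_smul, hξ, mul_one, Real.norm_eq_abs, abs_of_pos hτ0]
  -- infDist (τ•ξ) U ≤ τ + ‖u₀‖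
  have hbd : Metric.infDist (τ • ξ) U ≤ τ + ‖u₀‖ := by
    refine le_trans (Metric.infDist_le_dist_of_mem hu₀) ?_
    calc dist (τ • ξ) u₀ ≤ ‖τ • ξ‖ + ‖u₀‖ := by
          rw [dist_eq_norm]; exact norm_sub_le _ _
      _ = τ + ‖u₀‖ := by rw [hnorm]
  -- find a near-minimizer u ∈ U
  obtain ⟨u, huU, hud⟩ : ∃ u ∈ U, dist (τ • ξ) u < Metric.infDist (τ • ξ) U + 1 :=
    (Metric.infDist_lt_iff ⟨u₀, hu₀⟩).mp (by linarith [Metric.infDist_nonneg (x := τ • ξ) (s := U)])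
  have huball : u ∈ Metric.ball (0 : EuclideanSpace ℝ (Fin N)) R := by
    rw [Metric.mem_ball, dist_zero_right]
    have : ‖u‖ ≤ ‖τ • ξ‖ + dist (τ • ξ) u := by
      have h3 := dist_triangle (0 : EuclideanSpace ℝ (Fin N)) (τ • ξ) u
      rwa [dist_zero_left, dist_zero_left] at h3
    rw [hnorm] at this
    have : ‖u‖ < τ + (Metric.infDist (τ • ξ) U + 1) := by linarith
    rw [hR]; linarith
  have hUne : (U ∩ Metric.ball 0 R).Nonempty := ⟨u, huU, huball⟩
  have hedist := hR₀ R hRR₀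
  have hfin : EMetric.hausdorffEdist (U ∩ Metric.ball 0 R) (U' ∩ Metric.ball 0 R) ≠ ⊤ :=
    ne_top_of_le_ne_top ENNReal.ofReal_ne_top hedist
  have hU'ne : (U' ∩ Metric.ball 0 R).Nonempty :=
    EMetric.nonempty_of_hausdorffEdist_ne_top hUne hfin
  have hhd : Metric.hausdorffDist (U ∩ Metric.ball 0 R) (U' ∩ Metric.ball 0 R) ≤ ε / 8 * R :=
    ENNReal.toReal_le_of_le_ofReal (by positivity) hedist
  have h1 : Metric.infDist (τ • ξ) U' ≤ Metric.infDist (τ • ξ) (U' ∩ Metric.ball 0 R) :=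
    Metric.infDist_le_infDist_of_subset Set.inter_subset_left hU'ne
  have h2 : Metric.infDist (τ • ξ) (U' ∩ Metric.ball 0 R) ≤
      Metric.infDist (τ • ξ) (U ∩ Metric.ball 0 R) +
        Metric.hausdorffDist (U ∩ Metric.ball 0 R) (U' ∩ Metric.ball 0 R) :=
    Metric.infDist_le_infDist_add_hausdorffDist hfin
  have h3 : Metric.infDist (τ • ξ) (U ∩ Metric.ball 0 R) ≤ Metric.infDist (τ • ξ) U + 1 :=
    le_of_lt (lt_of_le_of_lt (Metric.infDist_le_dist_of_mem ⟨huU, huball⟩) hud)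
  have : ε / 8 * R = ε * τ / 2 := by rw [hR]; ring
  linarith

/-- The normalized distance function is eventually nonneg and bounded. -/
lemma fun_bounds {N : ℕ} (ξ : EuclideanSpace ℝ (Fin N))
    (U : Set (EuclideanSpace ℝ (Fin N))) (hU : U.Nonempty) (hξ : ‖ξ‖ = 1) :
    ∀ᶠ τ : ℝ in atTop, 0 ≤ Metric.infDist (τ • ξ) U / τ ∧
      Metric.infDist (τ • ξ) U / τ ≤ 1 + ‖hU.some‖ := by
  filter_upwards [eventually_ge_atTop (max 1 ‖hU.some‖)] with τ hτ
  have hτ1 : (1 : ℝ) ≤ τ := le_trans (le_max_left _ _) hτ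
  have hτ0 : (0 : ℝ) < τ := lt_of_lt_of_le one_pos hτ1
  constructor
  · exact div_nonneg (Metric.infDist_nonneg (s := U) (x := τ • ξ)) hτ0.le
  · have hnorm : ‖τ • ξ‖ = τ := by
      rw [norm_smul, hξ, mul_one, Real.norm_eq_abs, abs_of_pos hτ0]
    have hbd : Metric.infDist (τ • ξ) U ≤ τ + ‖hU.some‖ := by
      refine le_trans (Metric.infDist_le_dist_of_mem hU.some_mem) ?_
      calc dist (τ • ξ) hU.some ≤ ‖τ • ξ‖ + ‖hU.some‖ := by
            rw [dist_eq_norm]; exact norm_sub_le _ _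
        _ = τ + ‖hU.some‖ := by rw [hnorm]
    rw [div_le_iff₀ hτ0]
    nlinarith [norm_nonneg hU.some]

/-- if `d_H(U ∩ B_R, U' ∩ B_R)/R → 0` as `R → +∞`, then `B(U) = B(U')`
and `U(U) = U(U')`. -/
theorem boundedDirs_unboundedDirs_eq_of_local_hausdorff (N : ℕ) (hN : 1 ≤ N)
    (U U' : Set (EuclideanSpace ℝ (Fin N))) (hU : U.Nonempty) (hU' : U'.Nonempty)
    (h : ∀ ε : ℝ, 0 < ε → ∃ R₀ : ℝ, ∀ R : ℝ, R₀ ≤ R →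
      EMetric.hausdorffEdist (U ∩ Metric.ball 0 R) (U' ∩ Metric.ball 0 R)
        ≤ ENNReal.ofReal (ε * R)) :
    ∀ ξ : EuclideanSpace ℝ (Fin N), ‖ξ‖ = 1 →
      ((0 < Filter.liminf (fun τ : ℝ => Metric.infDist (τ • ξ) U / τ) Filter.atTop) ↔
        (0 < Filter.liminf (fun τ : ℝ => Metric.infDist (τ • ξ) U' / τ) Filter.atTop)) ∧
      ((Filter.Tendsto (fun τ : ℝ => Metric.infDist (τ • ξ) U / τ) Filter.atTop (nhds 0)) ↔
        (Filter.Tendsto (fun τ : ℝ => Metric.infDist (τ • ξ) U' / τ) Filter.atTop (nhds 0))) := by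
  intro ξ hξ
  have h' : ∀ ε : ℝ, 0 < ε → ∃ R₀ : ℝ, ∀ R : ℝ, R₀ ≤ R →
      EMetric.hausdorffEdist (U' ∩ Metric.ball 0 R) (U ∩ Metric.ball 0 R)
        ≤ ENNReal.ofReal (ε * R) := by
    intro ε hε
    obtain ⟨R₀, hR₀⟩ := h ε hε
    exact ⟨R₀, fun R hR => by unfold EMetric.hausdorffEdist; rw [Metric.hausdorffEDist_comm]; exact hR₀ R hR⟩
  -- main symmetric lemma in divided form
  have main : ∀ (V W : Set (EuclideanSpace ℝ (Fin N))), V.Nonempty →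
      (∀ ε : ℝ, 0 < ε → ∃ R₀ : ℝ, ∀ R : ℝ, R₀ ≤ R →
        EMetric.hausdorffEdist (V ∩ Metric.ball 0 R) (W ∩ Metric.ball 0 R)
          ≤ ENNReal.ofReal (ε * R)) →
      ∀ ε : ℝ, 0 < ε → ∀ᶠ τ : ℝ in atTop,
        Metric.infDist (τ • ξ) W / τ ≤ Metric.infDist (τ • ξ) V / τ + ε := by
    intro V W hV hVW ε hε
    filter_upwards [key_infDist_le ξ V W hV hVW hξ ε hε, eventually_gt_atTop (0 : ℝ)]
      with τ h1 h2
    calc Metric.infDist (τ • ξ) W / τ ≤ (Metric.infDist (τ • ξ) V + ε * τ) / τ :=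
          (div_le_div_iff_of_pos_right h2).mpr h1
      _ = Metric.infDist (τ • ξ) V / τ + ε := by field_simp
  -- one direction of the liminf statement, generic
  have liminf_dir : ∀ (V W : Set (EuclideanSpace ℝ (Fin N))) (hV : V.Nonempty)
      (hW : W.Nonempty),
      (∀ ε : ℝ, 0 < ε → ∀ᶠ τ : ℝ in atTop,
        Metric.infDist (τ • ξ) V / τ ≤ Metric.infDist (τ • ξ) W / τ + ε) →
      0 < Filter.liminf (fun τ : ℝ => Metric.infDist (τ • ξ) V / τ) Filter.atTop →
      0 < Filter.liminf (fun τ : ℝ => Metric.infDist (τ • ξ) W / τ) Filter.atTop := by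
    intro V W hV hW hcomp hpos
    set f := fun τ : ℝ => Metric.infDist (τ • ξ) V / τ
    set g := fun τ : ℝ => Metric.infDist (τ • ξ) W / τ
    have hfbd : IsBoundedUnder (· ≥ ·) atTop f :=
      isBoundedUnder_of_eventually_ge (a := (0:ℝ))
        ((fun_bounds ξ V hV hξ).mono fun τ ht => ht.1)
    have hgbd : IsBoundedUnder (· ≤ ·) atTop g :=
      isBoundedUnder_of_eventually_le (a := 1 + ‖hW.some‖)
        ((fun_bounds ξ W hW hξ).mono fun τ ht => ht.2)
    set L := Filter.liminf f atTop with hL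
    have hL2 : (0 : ℝ) < L / 2 := by positivity
    have hevf : ∀ᶠ τ in atTop, L / 2 < f τ :=
      eventually_lt_of_lt_liminf (by linarith) hfbd
    have hevc := hcomp (L / 4) (by positivity)
    have hev : ∀ᶠ τ in atTop, L / 4 ≤ g τ := by
      filter_upwards [hevf, hevc] with τ h1 h2; linarith
    have : L / 4 ≤ Filter.liminf g atTop :=
      le_liminf_of_le hgbd.isCoboundedUnder_ge hev
    linarith [this, hL2]
  -- one direction of the tendsto statement, generic
  have tendsto_dir : ∀ (V W : Set (EuclideanSpace ℝ (Fin N))) (hV : V.Nonempty)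
      (hW : W.Nonempty),
      (∀ ε : ℝ, 0 < ε → ∀ᶠ τ : ℝ in atTop,
        Metric.infDist (τ • ξ) W / τ ≤ Metric.infDist (τ • ξ) V / τ + ε) →
      Filter.Tendsto (fun τ : ℝ => Metric.infDist (τ • ξ) V / τ) Filter.atTop (nhds 0) →
      Filter.Tendsto (fun τ : ℝ => Metric.infDist (τ • ξ) W / τ) Filter.atTop (nhds 0) := by
    intro V W hV hW hcomp hf
    rw [Metric.tendsto_nhds]
    intro ε hε
    have h1 := hcomp (ε / 2) (by positivity)
    have h2 : ∀ᶠ τ in atTop, Metric.infDist (τ • ξ) V / τ < ε / 2 := by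
      have := Metric.tendsto_nhds.mp hf (ε / 2) (by positivity)
      filter_upwards [this] with τ ht
      rw [Real.dist_eq, sub_zero] at ht
      exact lt_of_abs_lt ht
    filter_upwards [h1, h2, fun_bounds ξ W hW hξ] with τ ht1 ht2 ht3
    rw [Real.dist_eq, sub_zero, abs_of_nonneg ht3.1]
    linarith
  have c1 := main U U' hU h
  have c2 := main U' U hU' h'
  constructor
  · exact ⟨liminf_dir U U' hU hU' c2, liminf_dir U' U hU' hU c1⟩
  · exact ⟨tendsto_dir U U' hU hU' c1, tendsto_dir U' U hU' hU c2⟩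
end

section
/- Let w : S^{N-1} → [c*, +∞] be defined by w(e) = sup{ c*/√(1 − (ξ·e)²) : ξ ∈ U(U), ξ·e ≥ 0 }, with w(e) = c* if no ξ ∈ U(U) satisfies ξ·e ≥ 0 and w(e) = +∞ if e ∈ U(U). Then the envelope set W := { r e : e ∈ S^{N-1}, 0 ≤ r < w(e) } equals ℝ⁺·U(U) + B_{c*} (with the convention ℝ⁺·∅ + B_{c*} = B_{c*}). -/
open Filter Metric Topology
open scoped Classical Pointwise

/-- The set of unbounded directions `U(U)` of a set `U ⊆ ℝ^N`. -/
def unbDirs (N : ℕ) (U : Set (EuclideanSpace ℝ (Fin N))) :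
    Set (EuclideanSpace ℝ (Fin N)) :=
  {ξ | ‖ξ‖ = 1 ∧
    Filter.Tendsto (fun τ : ℝ => Metric.infDist (τ • ξ) U / τ) Filter.atTop (nhds 0)}

/-- The spreading speed `w(e) = sup{c*/√(1-(ξ·e)²) : ξ ∈ U(U), ξ·e ≥ 0}`, with the
conventions `w(e) = c*` if no `ξ ∈ U(U)` satisfies `ξ·e ≥ 0`, and `w(e) = +∞` if
`e ∈ U(U)`. -/
noncomputable def wspeed (N : ℕ) (cs : ℝ) (U : Set (EuclideanSpace ℝ (Fin N)))
    (e : EuclideanSpace ℝ (Fin N)) : EReal :=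
  if e ∈ unbDirs N U then ⊤
  else if ∃ ξ ∈ unbDirs N U, 0 ≤ (inner ℝ ξ e : ℝ) then
    sSup {x : EReal | ∃ ξ ∈ unbDirs N U, 0 ≤ (inner ℝ ξ e : ℝ) ∧
      x = ((cs / Real.sqrt (1 - (inner ℝ ξ e : ℝ) ^ 2) : ℝ) : EReal)}
  else (cs : EReal)

/- auxiliary lemmas -/

lemma aux_exists_tau_nonneg {cs r t : ℝ} (hr : 0 ≤ r) (ht : 0 ≤ t)
    (h : r ^ 2 * (1 - t ^ 2) < cs ^ 2) :
    ∃ τ : ℝ, 0 < τ ∧ r ^ 2 + τ ^ 2 - 2 * r * τ * t < cs ^ 2 := by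
  set D := cs ^ 2 - r ^ 2 * (1 - t ^ 2) with hD
  have hD0 : 0 < D := by linarith
  refine ⟨r * t + Real.sqrt D / 2, ?_, ?_⟩
  · have := Real.sqrt_pos.mpr hD0
    positivity
  · have hs : Real.sqrt D ^ 2 = D := Real.sq_sqrt hD0.le
    nlinarith [Real.sqrt_pos.mpr hD0]

lemma aux_exists_tau_neg {cs r t : ℝ} (hr : 0 ≤ r) (ht1 : -1 ≤ t) (hrc : r < cs) :
    ∃ τ : ℝ, 0 < τ ∧ r ^ 2 + τ ^ 2 - 2 * r * τ * t < cs ^ 2 := by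
  have hτ : (0:ℝ) < (cs - r)/2 := by linarith
  refine ⟨(cs - r)/2, hτ, ?_⟩
  nlinarith [mul_nonneg (mul_nonneg hr hτ.le) (show (0:ℝ) ≤ 1 + t by linarith)]

lemma aux_norm_sq {N : ℕ} (r τ t : ℝ) (e ξ : EuclideanSpace ℝ (Fin N)) (he : ‖e‖ = 1)
    (hξ : ‖ξ‖ = 1) (ht : (inner ℝ ξ e : ℝ) = t) :
    ‖r • e - τ • ξ‖ ^ 2 = r ^ 2 + τ ^ 2 - 2 * r * τ * t := by
  have h1 : (inner ℝ (r • e) (τ • ξ) : ℝ) = r * τ * t := by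
    rw [real_inner_smul_left, real_inner_smul_right, real_inner_comm, ht]; ring
  rw [norm_sub_sq_real, h1, norm_smul, norm_smul, he, hξ]
  simp [mul_pow, sq_abs]
  ring

lemma aux_inner_le_one {N : ℕ} {e ξ : EuclideanSpace ℝ (Fin N)} (he : ‖e‖ = 1)
    (hξ : ‖ξ‖ = 1) : |(inner ℝ ξ e : ℝ)| ≤ 1 := by
  have := abs_real_inner_le_norm ξ e
  rwa [he, hξ, one_mul] at this

lemma aux_inner_lt_one {N : ℕ} {U : Set (EuclideanSpace ℝ (Fin N))}
    {e ξ : EuclideanSpace ℝ (Fin N)} (he : ‖e‖ = 1) (hξ : ξ ∈ unbDirs N U)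
    (heU : e ∉ unbDirs N U) : (inner ℝ ξ e : ℝ) < 1 := by
  rcases lt_or_eq_of_le ((abs_le.mp (aux_inner_le_one he hξ.1)).2) with h | h
  · exact h
  · exfalso
    have hsq : ‖ξ - e‖ ^ 2 = 0 := by
      rw [norm_sub_sq_real, hξ.1, he, h]; ring
    have : ξ = e := by
      have h0 := pow_eq_zero_iff (n := 2) (by norm_num) |>.mp hsq
      exact sub_eq_zero.mp (norm_eq_zero.mp h0)
    exact heU (this ▸ hξ)

lemma aux_cs_le_wspeed {N : ℕ} {cs : ℝ} (hcs : 0 < cs) {U : Set (EuclideanSpace ℝ (Fin N))}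
    {e : EuclideanSpace ℝ (Fin N)} (he : ‖e‖ = 1) : (cs : EReal) ≤ wspeed N cs U e := by
  unfold wspeed
  split_ifs with h1 h2
  · exact le_top
  · obtain ⟨ξ, hξ, ht⟩ := h2
    set t := (inner ℝ ξ e : ℝ) with htdef
    have ht1 : t < 1 := aux_inner_lt_one he hξ h1
    have hpos : 0 < 1 - t ^ 2 := by nlinarith
    have hsle : Real.sqrt (1 - t ^ 2) ≤ 1 := by
      have : Real.sqrt (1 - t ^ 2) ≤ Real.sqrt 1 := Real.sqrt_le_sqrt (by nlinarith)
      simpa using this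
    have hspos : 0 < Real.sqrt (1 - t ^ 2) := Real.sqrt_pos.mpr hpos
    have hle : cs ≤ cs / Real.sqrt (1 - t ^ 2) := by
      rw [le_div_iff₀ hspos]
      nlinarith
    have hmem : ((cs / Real.sqrt (1 - t ^ 2) : ℝ) : EReal) ∈
        {x : EReal | ∃ ξ ∈ unbDirs N U, 0 ≤ (inner ℝ ξ e : ℝ) ∧
          x = ((cs / Real.sqrt (1 - (inner ℝ ξ e : ℝ) ^ 2) : ℝ) : EReal)} :=
      ⟨ξ, hξ, ht, by rw [← htdef]⟩
    calc (cs : EReal) ≤ ((cs / Real.sqrt (1 - t ^ 2) : ℝ) : EReal) := by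
          exact_mod_cast hle
      _ ≤ _ := le_sSup hmem
  · exact le_refl _

/-- backward key: from a witness in the cone+ball, `r < wspeed`. -/
lemma aux_lt_wspeed {N : ℕ} {cs : ℝ} (hcs : 0 < cs) {U : Set (EuclideanSpace ℝ (Fin N))}
    {e ξ : EuclideanSpace ℝ (Fin N)} (he : ‖e‖ = 1) (hξ : ξ ∈ unbDirs N U)
    {r τ : ℝ} (hr : 0 ≤ r) (hτ : 0 < τ) (h : ‖r • e - τ • ξ‖ < cs) :
    (r : EReal) < wspeed N cs U e := by
  by_cases h1 : e ∈ unbDirs N U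
  · rw [wspeed, if_pos h1]; exact EReal.coe_lt_top r
  set t := (inner ℝ ξ e : ℝ) with htdef
  have hsq : r ^ 2 + τ ^ 2 - 2 * r * τ * t < cs ^ 2 := by
    rw [← aux_norm_sq r τ t e ξ he hξ.1 rfl]
    have h0 : 0 ≤ ‖r • e - τ • ξ‖ := norm_nonneg _
    nlinarith
  by_cases ht : 0 ≤ t
  · -- r < cs / sqrt(1 - t^2) which is in the sup set
    have ht1 : t < 1 := aux_inner_lt_one he hξ h1
    have hpos : 0 < 1 - t ^ 2 := by nlinarith
    have hspos : 0 < Real.sqrt (1 - t ^ 2) := Real.sqrt_pos.mpr hpos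
    have hs2 : Real.sqrt (1 - t ^ 2) ^ 2 = 1 - t ^ 2 := Real.sq_sqrt hpos.le
    have hkey : r ^ 2 * (1 - t ^ 2) < cs ^ 2 := by nlinarith [sq_nonneg (τ - r * t)]
    have hrlt : r < cs / Real.sqrt (1 - t ^ 2) := by
      rw [lt_div_iff₀ hspos]
      nlinarith [mul_nonneg hr hspos.le]
    rw [wspeed, if_neg h1, if_pos ⟨ξ, hξ, ht⟩]
    have hmem : ((cs / Real.sqrt (1 - t ^ 2) : ℝ) : EReal) ∈
        {x : EReal | ∃ ξ ∈ unbDirs N U, 0 ≤ (inner ℝ ξ e : ℝ) ∧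
          x = ((cs / Real.sqrt (1 - (inner ℝ ξ e : ℝ) ^ 2) : ℝ) : EReal)} :=
      ⟨ξ, hξ, ht, by rw [← htdef]⟩
    calc (r : EReal) < ((cs / Real.sqrt (1 - t ^ 2) : ℝ) : EReal) := by exact_mod_cast hrlt
      _ ≤ _ := le_sSup hmem
  · -- t < 0, so r < cs ≤ wspeed
    have ht' : t < 0 := lt_of_not_ge ht
    have hrcs : r < cs := by
      have h2 : r ^ 2 < cs ^ 2 := by nlinarith [mul_pos hτ hτ, mul_nonneg hr hτ.le]
      nlinarith
    calc (r : EReal) < (cs : EReal) := by exact_mod_cast hrcs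
      _ ≤ _ := aux_cs_le_wspeed hcs he

/-- forward key: from `r < wspeed`, a witness in the cone+ball (nonempty case). -/
lemma aux_exists_witness {N : ℕ} {cs : ℝ} (hcs : 0 < cs) {U : Set (EuclideanSpace ℝ (Fin N))}
    (hUD : (unbDirs N U).Nonempty) {e : EuclideanSpace ℝ (Fin N)} (he : ‖e‖ = 1)
    {r : ℝ} (hr : 0 ≤ r) (h : (r : EReal) < wspeed N cs U e) :
    ∃ τ : ℝ, 0 < τ ∧ ∃ ξ ∈ unbDirs N U, ‖r • e - τ • ξ‖ < cs := by
  have key : ∃ ξ ∈ unbDirs N U, ∃ τ : ℝ, 0 < τ ∧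
      r ^ 2 + τ ^ 2 - 2 * r * τ * (inner ℝ ξ e : ℝ) < cs ^ 2 := by
    by_cases h1 : e ∈ unbDirs N U
    · -- ξ = e, t = 1
      refine ⟨e, h1, ?_⟩
      have : (inner ℝ e e : ℝ) = 1 := by
        rw [real_inner_self_eq_norm_sq, he]; norm_num
      rw [this]
      exact aux_exists_tau_nonneg hr zero_le_one (by nlinarith)
    by_cases h2 : ∃ ξ ∈ unbDirs N U, 0 ≤ (inner ℝ ξ e : ℝ)
    · rw [wspeed, if_neg h1, if_pos h2] at h
      obtain ⟨x, ⟨ξ, hξ, ht, rfl⟩, hx⟩ := lt_sSup_iff.mp h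
      set t := (inner ℝ ξ e : ℝ) with htdef
      have hrlt : r < cs / Real.sqrt (1 - t ^ 2) := by exact_mod_cast hx
      have ht1 : t < 1 := aux_inner_lt_one he hξ h1
      have hpos : 0 < 1 - t ^ 2 := by nlinarith
      have hspos : 0 < Real.sqrt (1 - t ^ 2) := Real.sqrt_pos.mpr hpos
      have hs2 : Real.sqrt (1 - t ^ 2) ^ 2 = 1 - t ^ 2 := Real.sq_sqrt hpos.le
      have hkey : r ^ 2 * (1 - t ^ 2) < cs ^ 2 := by
        have := (lt_div_iff₀ hspos).mp hrlt
        nlinarith [mul_nonneg hr hspos.le]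
      exact ⟨ξ, hξ, aux_exists_tau_nonneg hr ht hkey⟩
    · rw [wspeed, if_neg h1, if_neg h2] at h
      have hrcs : r < cs := by exact_mod_cast h
      obtain ⟨ξ, hξ⟩ := hUD
      refine ⟨ξ, hξ, ?_⟩
      have ht1 : -1 ≤ (inner ℝ ξ e : ℝ) := (abs_le.mp (aux_inner_le_one he hξ.1)).1
      exact aux_exists_tau_neg hr ht1 hrcs
  obtain ⟨ξ, hξ, τ, hτ, hlt⟩ := key
  refine ⟨τ, hτ, ξ, hξ, ?_⟩
  have := aux_norm_sq r τ (inner ℝ ξ e : ℝ) e ξ he hξ.1 rfl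
  nlinarith [norm_nonneg (r • e - τ • ξ)]

/-- the envelope set `W = {re : e ∈ S^{N-1}, 0 ≤ r < w(e)}` equals
`ℝ⁺·U(U) + B_{c*}` (Minkowski sum), with the convention `ℝ⁺·∅ + B_{c*} = B_{c*}`. -/
theorem envelope_eq_cone_add_ball (N : ℕ) (hN : 1 ≤ N) (cs : ℝ) (hcs : 0 < cs)
    (U : Set (EuclideanSpace ℝ (Fin N))) :
    {x : EuclideanSpace ℝ (Fin N) | ∃ e : EuclideanSpace ℝ (Fin N), ‖e‖ = 1 ∧
        ∃ r : ℝ, 0 ≤ r ∧ (r : EReal) < wspeed N cs U e ∧ x = r • e}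
      = if (unbDirs N U).Nonempty then
          {y : EuclideanSpace ℝ (Fin N) | ∃ τ : ℝ, 0 < τ ∧ ∃ ξ ∈ unbDirs N U, y = τ • ξ}
            + Metric.ball (0 : EuclideanSpace ℝ (Fin N)) cs
        else Metric.ball (0 : EuclideanSpace ℝ (Fin N)) cs := by
  by_cases hUD : (unbDirs N U).Nonempty
  · rw [if_pos hUD]
    ext x
    constructor
    · rintro ⟨e, he, r, hr, hlt, rfl⟩
      obtain ⟨τ, hτ, ξ, hξ, hb⟩ := aux_exists_witness hcs hUD he hr hlt
      refine Set.mem_add.mpr ⟨τ • ξ, ⟨τ, hτ, ξ, hξ, rfl⟩, r • e - τ • ξ, ?_, by abel⟩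
      simpa [mem_ball, dist_eq_norm] using hb
    · rintro hx
      obtain ⟨a, ⟨τ, hτ, ξ, hξ, rfl⟩, b, hb, hab⟩ := Set.mem_add.mp hx
      rw [mem_ball, dist_eq_norm, sub_zero] at hb
      by_cases hx0 : x = 0
      · refine ⟨ξ, hξ.1, 0, le_refl _, ?_, by simp [hx0]⟩
        rw [wspeed, if_pos hξ]
        exact EReal.coe_lt_top 0
      · set r := ‖x‖ with hrdef
        have hr0 : 0 < r := norm_pos_iff.mpr hx0
        set e := r⁻¹ • x with hedef
        have he : ‖e‖ = 1 := by
          rw [hedef, norm_smul, norm_inv, norm_norm, ← hrdef, inv_mul_cancel₀ hr0.ne']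
        have hxe : x = r • e := by
          rw [hedef, smul_smul, mul_inv_cancel₀ hr0.ne', one_smul]
        have hb' : ‖r • e - τ • ξ‖ < cs := by
          rw [← hxe]
          have : x - τ • ξ = b := by rw [← hab]; abel
          rwa [this]
        exact ⟨e, he, r, hr0.le, aux_lt_wspeed hcs he hξ hr0.le hτ hb', hxe⟩
  · rw [if_neg hUD]
    have hw : ∀ e : EuclideanSpace ℝ (Fin N), wspeed N cs U e = (cs : EReal) := by
      intro e
      rw [wspeed, if_neg (fun h => hUD ⟨e, h⟩), if_neg]
      rintro ⟨ξ, hξ, -⟩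
      exact hUD ⟨ξ, hξ⟩
    ext x
    constructor
    · rintro ⟨e, he, r, hr, hlt, rfl⟩
      rw [hw] at hlt
      have : r < cs := by exact_mod_cast hlt
      rw [mem_ball, dist_eq_norm, sub_zero, norm_smul, he, mul_one]
      rwa [Real.norm_eq_abs, abs_of_nonneg hr]
    · intro hx
      rw [mem_ball, dist_eq_norm, sub_zero] at hx
      by_cases hx0 : x = 0
      · refine ⟨EuclideanSpace.single ⟨0, hN⟩ (1:ℝ), ?_, 0, le_refl _, ?_, by simp [hx0]⟩
        · simp [EuclideanSpace.norm_single]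
        · rw [hw]; exact_mod_cast hcs
      · set r := ‖x‖ with hrdef
        have hr0 : 0 < r := norm_pos_iff.mpr hx0
        refine ⟨r⁻¹ • x, ?_, r, hr0.le, ?_, ?_⟩
        · rw [norm_smul, norm_inv, norm_norm, ← hrdef, inv_mul_cancel₀ hr0.ne']
        · rw [hw]; exact_mod_cast hx
        · rw [smul_smul, mul_inv_cancel₀ hr0.ne', one_smul]
end

section
/- Let U ⊆ ℝ^N with U(U) ≠ ∅, and let w(e) be defined by w(e) = sup{ c*/√(1 − (ξ·e)²) : ξ ∈ U(U), ξ·e ≥ 0 } with the conventions w(e) = c* if no such ξ exists and w(e) = +∞ if e ∈ U(U). Then for every e ∈ S^{N-1}, w(e) = c* / dist(e, ℝ⁺·U(U)), with the convention c*/0 = +∞. In particular the map e ↦ w(e) ∈ [c*, +∞] is continuous on S^{N-1}. -/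
open Filter Metric Topology
open scoped Classical

/-- The open positive cone `ℝ⁺·U(U)` generated by the unbounded directions. -/
def posCone (N : ℕ) (U : Set (EuclideanSpace ℝ (Fin N))) :
    Set (EuclideanSpace ℝ (Fin N)) :=
  {x | ∃ τ : ℝ, 0 < τ ∧ ∃ ξ ∈ unbDirs N U, x = τ • ξ}

section Aux

variable {N : ℕ} {U : Set (EuclideanSpace ℝ (Fin N))}

lemma unbDirs_isClosed : IsClosed (unbDirs N U) := by
  rw [← isSeqClosed_iff_isClosed]
  intro ξs ξ hmem hlim
  constructor
  · have h1 : Tendsto (fun n => ‖ξs n‖) atTop (𝓝 ‖ξ‖) := hlim.norm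
    have h2 : (fun n => ‖ξs n‖) = fun _ => (1 : ℝ) := funext fun n => (hmem n).1
    rw [h2] at h1
    exact tendsto_nhds_unique h1 tendsto_const_nhds
  · rw [Metric.tendsto_nhds]
    intro ε hε
    obtain ⟨n, hn⟩ : ∃ n, dist (ξs n) ξ < ε / 2 := by
      obtain ⟨n, hn⟩ := (Metric.tendsto_atTop.1 hlim) (ε / 2) (by positivity)
      exact ⟨n, hn n le_rfl⟩
    have h2 := Metric.tendsto_nhds.1 (hmem n).2 (ε / 2) (by positivity)
    filter_upwards [h2, eventually_gt_atTop (0 : ℝ)] with τ hτ1 hτ2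
    rw [Real.dist_eq, sub_zero] at hτ1 ⊢
    rw [abs_of_nonneg (div_nonneg Metric.infDist_nonneg hτ2.le)]
    have h3 : Metric.infDist (τ • ξ) U ≤ Metric.infDist (τ • ξs n) U + τ * dist (ξs n) ξ := by
      calc Metric.infDist (τ • ξ) U
          ≤ Metric.infDist (τ • ξs n) U + dist (τ • ξ) (τ • ξs n) :=
            Metric.infDist_le_infDist_add_dist
        _ = Metric.infDist (τ • ξs n) U + τ * dist (ξs n) ξ := by
            rw [dist_smul₀, Real.norm_eq_abs, abs_of_pos hτ2, dist_comm]
    have h4 : Metric.infDist (τ • ξs n) U / τ < ε / 2 :=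
      lt_of_le_of_lt (le_abs_self _) hτ1
    calc Metric.infDist (τ • ξ) U / τ
        ≤ (Metric.infDist (τ • ξs n) U + τ * dist (ξs n) ξ) / τ := by gcongr
      _ = Metric.infDist (τ • ξs n) U / τ + dist (ξs n) ξ := by
          field_simp
      _ < ε / 2 + ε / 2 := by exact add_lt_add h4 hn
      _ = ε := by ring

lemma unbDirs_isCompact : IsCompact (unbDirs N U) :=
  (isCompact_sphere (0 : EuclideanSpace ℝ (Fin N)) 1).of_isClosed_subset unbDirs_isClosed
    (fun ξ hξ => by simpa [mem_sphere_zero_iff_norm] using hξ.1)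

lemma dist_smul_sq {e ξ : EuclideanSpace ℝ (Fin N)} (he : ‖e‖ = 1) (hξ : ‖ξ‖ = 1) (τ : ℝ) :
    dist e (τ • ξ) ^ 2 = 1 - 2 * τ * (inner ℝ ξ e : ℝ) + τ ^ 2 := by
  rw [dist_eq_norm, norm_sub_sq_real, he, norm_smul, hξ, real_inner_smul_right,
    real_inner_comm, Real.norm_eq_abs]
  rw [mul_one, sq_abs]
  ring

lemma infDist_posCone_eq (hne : (unbDirs N U).Nonempty) {e : EuclideanSpace ℝ (Fin N)}
    (he : ‖e‖ = 1) {ξ₀ : EuclideanSpace ℝ (Fin N)} (hξ₀ : ξ₀ ∈ unbDirs N U)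
    (hmax : ∀ ξ ∈ unbDirs N U,
      max (inner ℝ ξ e : ℝ) 0 ≤ max (inner ℝ ξ₀ e : ℝ) 0) :
    Metric.infDist e (posCone N U) = Real.sqrt (1 - (max (inner ℝ ξ₀ e : ℝ) 0) ^ 2) := by
  set s₀ : ℝ := max (inner ℝ ξ₀ e : ℝ) 0 with hs₀def
  have hs₀0 : 0 ≤ s₀ := le_max_right _ _
  have hs₀1 : s₀ ≤ 1 := by
    have := real_inner_le_norm ξ₀ e
    rw [hξ₀.1, he, one_mul] at this
    exact max_le this zero_le_one
  have hnn : 0 ≤ 1 - s₀ ^ 2 := by nlinarith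
  have hCne : (posCone N U).Nonempty := ⟨(1 : ℝ) • ξ₀, 1, one_pos, ξ₀, hξ₀, rfl⟩
  apply le_antisymm
  · rcases le_or_gt (inner ℝ ξ₀ e : ℝ) 0 with hle | hpos
    · have hz : s₀ = 0 := max_eq_right hle
      rw [hz]
      norm_num
      refine le_of_forall_pos_le_add fun δ hδ => ?_
      have hmem : δ • ξ₀ ∈ posCone N U := ⟨δ, hδ, ξ₀, hξ₀, rfl⟩
      calc Metric.infDist e (posCone N U) ≤ dist e (δ • ξ₀) :=
            Metric.infDist_le_dist_of_mem hmem
        _ ≤ ‖e‖ + ‖δ • ξ₀‖ := by rw [dist_eq_norm]; exact norm_sub_le _ _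
        _ = 1 + δ := by
            rw [he, norm_smul, hξ₀.1, Real.norm_eq_abs, abs_of_pos hδ, mul_one]
    · have hz : s₀ = (inner ℝ ξ₀ e : ℝ) := max_eq_left hpos.le
      have hmem : (inner ℝ ξ₀ e : ℝ) • ξ₀ ∈ posCone N U := ⟨_, hpos, ξ₀, hξ₀, rfl⟩
      refine le_trans (Metric.infDist_le_dist_of_mem hmem) ?_
      have hd : dist e ((inner ℝ ξ₀ e : ℝ) • ξ₀) ^ 2 = 1 - s₀ ^ 2 := by
        rw [dist_smul_sq he hξ₀.1, hz]; ring
      rw [← Real.sqrt_sq dist_nonneg, hd]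
  · by_contra hcon
    push_neg at hcon
    obtain ⟨y, hy, hdy⟩ := (Metric.infDist_lt_iff hCne).1 hcon
    obtain ⟨τ, hτ, ξ, hξ, rfl⟩ := hy
    have h1 : dist e (τ • ξ) ^ 2 < 1 - s₀ ^ 2 :=
      (Real.lt_sqrt dist_nonneg).1 hdy
    rw [dist_smul_sq he hξ.1 τ] at h1
    have hs := hmax ξ hξ
    have h2 : (inner ℝ ξ e : ℝ) ≤ max (inner ℝ ξ e : ℝ) 0 := le_max_left _ _
    have h3 : (0 : ℝ) ≤ max (inner ℝ ξ e : ℝ) 0 := le_max_right _ _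
    have h4 : max (inner ℝ ξ e : ℝ) 0 * max (inner ℝ ξ e : ℝ) 0 ≤ s₀ * s₀ :=
      mul_self_le_mul_self h3 hs
    nlinarith [sq_nonneg (τ - max (inner ℝ ξ e : ℝ) 0)]

end Aux

/-- if `U(U) ≠ ∅`, then for every `e ∈ S^{N-1}`,
`w(e) = c*/dist(e, ℝ⁺·U(U))` with the convention `c*/0 = +∞`; in particular
`e ↦ w(e) ∈ [c*,+∞]` is continuous on `S^{N-1}`. -/
theorem wspeed_eq_div_dist_and_continuous (N : ℕ) (hN : 1 ≤ N) (cs : ℝ) (hcs : 0 < cs)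
    (U : Set (EuclideanSpace ℝ (Fin N))) (hne : (unbDirs N U).Nonempty) :
    (∀ e : EuclideanSpace ℝ (Fin N), ‖e‖ = 1 →
      wspeed N cs U e =
        if Metric.infDist e (posCone N U) = 0 then (⊤ : EReal)
        else ((cs / Metric.infDist e (posCone N U) : ℝ) : EReal)) ∧
    Continuous (fun e : Metric.sphere (0 : EuclideanSpace ℝ (Fin N)) 1 =>
      wspeed N cs U (e : EuclideanSpace ℝ (Fin N))) := by
  have part1 : ∀ e : EuclideanSpace ℝ (Fin N), ‖e‖ = 1 →
      wspeed N cs U e =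
        if Metric.infDist e (posCone N U) = 0 then (⊤ : EReal)
        else ((cs / Metric.infDist e (posCone N U) : ℝ) : EReal) := by
    intro e he
    have hcont : Continuous fun ξ : EuclideanSpace ℝ (Fin N) => max (inner ℝ ξ e : ℝ) 0 :=
      (Continuous.inner continuous_id continuous_const).max continuous_const
    obtain ⟨ξ₀, hξ₀, hmax⟩ := unbDirs_isCompact.exists_isMaxOn hne hcont.continuousOn
    have hmax' : ∀ ξ ∈ unbDirs N U,
        max (inner ℝ ξ e : ℝ) 0 ≤ max (inner ℝ ξ₀ e : ℝ) 0 := fun ξ hξ => hmax hξ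
    set s₀ : ℝ := max (inner ℝ ξ₀ e : ℝ) 0 with hs₀def
    have hs₀0 : 0 ≤ s₀ := le_max_right _ _
    have hs₀1 : s₀ ≤ 1 := by
      have := real_inner_le_norm ξ₀ e
      rw [hξ₀.1, he, one_mul] at this
      exact max_le this zero_le_one
    have hdist := infDist_posCone_eq hne he hξ₀ hmax'
    rw [← hs₀def] at hdist
    by_cases heD : e ∈ unbDirs N U
    · have h0 : Metric.infDist e (posCone N U) = 0 :=
        Metric.infDist_zero_of_mem ⟨1, one_pos, e, heD, (one_smul _ _).symm⟩
      rw [wspeed, if_pos heD, h0, if_pos rfl]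
    · have hs₀lt : s₀ < 1 := by
        rcases lt_or_eq_of_le hs₀1 with h | h
        · exact h
        · exfalso
          have hip : (inner ℝ ξ₀ e : ℝ) = 1 := by
            rcases max_cases (inner ℝ ξ₀ e : ℝ) 0 with ⟨h1, _⟩ | ⟨h1, _⟩ <;> linarith
          have : ξ₀ = e := (inner_eq_one_iff_of_norm_eq_one hξ₀.1 he).1 hip
          exact heD (this ▸ hξ₀)
      have hsqpos : 0 < Real.sqrt (1 - s₀ ^ 2) := Real.sqrt_pos.2 (by nlinarith)
      have hpos : 0 < Metric.infDist e (posCone N U) := hdist ▸ hsqpos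
      rw [if_neg hpos.ne', wspeed, if_neg heD]
      by_cases hex : ∃ ξ ∈ unbDirs N U, 0 ≤ (inner ℝ ξ e : ℝ)
      · rw [if_pos hex]
        obtain ⟨ξw, hξw, hw0, hweq⟩ : ∃ ξw ∈ unbDirs N U,
            0 ≤ (inner ℝ ξw e : ℝ) ∧ (inner ℝ ξw e : ℝ) = s₀ := by
          rcases le_or_gt 0 (inner ℝ ξ₀ e : ℝ) with h | h
          · exact ⟨ξ₀, hξ₀, h, (max_eq_left h).symm⟩
          · obtain ⟨ξ1, hξ1, h1⟩ := hex
            have hz : s₀ = 0 := max_eq_right h.le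
            have h2 : (inner ℝ ξ1 e : ℝ) ≤ 0 := by
              have := hmax' ξ1 hξ1
              rw [hz] at this
              exact le_trans (le_max_left _ _) this
            exact ⟨ξ1, hξ1, h1, by rw [hz]; exact le_antisymm h2 h1⟩
        apply le_antisymm
        · apply sSup_le
          rintro x ⟨ξ, hξ, hinner, rfl⟩
          rw [EReal.coe_le_coe_iff, hdist]
          have hsle : (inner ℝ ξ e : ℝ) ≤ s₀ := by
            have := hmax' ξ hξ
            exact le_trans (le_max_left _ _) this
          have : Real.sqrt (1 - s₀ ^ 2) ≤ Real.sqrt (1 - (inner ℝ ξ e : ℝ) ^ 2) := by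
            apply Real.sqrt_le_sqrt
            nlinarith
          exact div_le_div_of_nonneg_left hcs.le hsqpos this
        · apply le_sSup
          refine ⟨ξw, hξw, hw0, ?_⟩
          rw [hdist, hweq]
      · rw [if_neg hex]
        push_neg at hex
        have h0 : (inner ℝ ξ₀ e : ℝ) < 0 := hex ξ₀ hξ₀
        have hz : s₀ = 0 := max_eq_right h0.le
        rw [hdist, hz]
        norm_num
  refine ⟨part1, ?_⟩
  set C := posCone N U with hC
  have hfc : Continuous fun e : Metric.sphere (0 : EuclideanSpace ℝ (Fin N)) 1 =>
      Metric.infDist (e : EuclideanSpace ℝ (Fin N)) C :=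
    (Metric.continuous_infDist_pt C).comp continuous_subtype_val
  have heq : (fun e : Metric.sphere (0 : EuclideanSpace ℝ (Fin N)) 1 =>
        wspeed N cs U (e : EuclideanSpace ℝ (Fin N))) =
      fun e : Metric.sphere (0 : EuclideanSpace ℝ (Fin N)) 1 =>
        if Metric.infDist (e : EuclideanSpace ℝ (Fin N)) C = 0 then (⊤ : EReal)
        else ((cs / Metric.infDist (e : EuclideanSpace ℝ (Fin N)) C : ℝ) : EReal) := by
    funext e
    exact part1 e (mem_sphere_zero_iff_norm.1 e.2)
  rw [heq, continuous_iff_continuousAt]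
  intro e₀
  by_cases h0 : Metric.infDist (e₀ : EuclideanSpace ℝ (Fin N)) C = 0
  · have htop : (if Metric.infDist (e₀ : EuclideanSpace ℝ (Fin N)) C = 0 then (⊤ : EReal)
        else ((cs / Metric.infDist (e₀ : EuclideanSpace ℝ (Fin N)) C : ℝ) : EReal)) = ⊤ :=
      if_pos h0
    unfold ContinuousAt
    simp only []
    rw [htop, EReal.tendsto_nhds_top_iff_real]
    intro r
    set r' : ℝ := max r 0 + 1 with hr'def
    have hr' : 0 < r' := by positivity
    have hlt : Metric.infDist (e₀ : EuclideanSpace ℝ (Fin N)) C < cs / r' := by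
      rw [h0]; positivity
    have hev : ∀ᶠ e : Metric.sphere (0 : EuclideanSpace ℝ (Fin N)) 1 in 𝓝 e₀,
        Metric.infDist (e : EuclideanSpace ℝ (Fin N)) C < cs / r' :=
      hfc.continuousAt.eventually_lt continuousAt_const hlt
    filter_upwards [hev] with e hee
    by_cases hz : Metric.infDist (e : EuclideanSpace ℝ (Fin N)) C = 0
    · rw [if_pos hz]; exact EReal.coe_lt_top r
    · rw [if_neg hz, EReal.coe_lt_coe_iff]
      have hzpos : 0 < Metric.infDist (e : EuclideanSpace ℝ (Fin N)) C :=
        lt_of_le_of_ne Metric.infDist_nonneg (Ne.symm hz)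
      have h5 : r' < cs / Metric.infDist (e : EuclideanSpace ℝ (Fin N)) C := by
        rw [lt_div_iff₀ hzpos]
        calc r' * Metric.infDist (e : EuclideanSpace ℝ (Fin N)) C
            < r' * (cs / r') := by gcongr
          _ = cs := by field_simp
      have : r ≤ max r 0 := le_max_left _ _
      linarith
  · have hpos : 0 < Metric.infDist (e₀ : EuclideanSpace ℝ (Fin N)) C :=
      lt_of_le_of_ne Metric.infDist_nonneg (Ne.symm h0)
    have hg : ContinuousAt (fun e : Metric.sphere (0 : EuclideanSpace ℝ (Fin N)) 1 =>
        ((cs / Metric.infDist (e : EuclideanSpace ℝ (Fin N)) C : ℝ) : EReal)) e₀ :=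
      continuous_coe_real_ereal.continuousAt.comp
        (ContinuousAt.div continuousAt_const hfc.continuousAt h0)
    apply hg.congr
    have hev : ∀ᶠ e : Metric.sphere (0 : EuclideanSpace ℝ (Fin N)) 1 in 𝓝 e₀,
        0 < Metric.infDist (e : EuclideanSpace ℝ (Fin N)) C :=
      continuousAt_const.eventually_lt hfc.continuousAt hpos
    filter_upwards [hev] with e hee
    rw [if_neg hee.ne']
end

section
/- Let φ ∈ C²(ℝ) and c ∈ ℝ satisfy φ'' + cφ' + f(φ) = 0 on ℝ together with φ(−∞) = 1 > φ(z) > φ(+∞) = 0 for all z ∈ ℝ, where f ∈ C¹([0,1]) with f(0) = f(1) = 0. Then φ' < 0 on ℝ. -/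
open Filter Topology

private lemma ode_unique_global {K : NNReal} {G : ℝ × ℝ → ℝ × ℝ} (hG : LipschitzWith K G)
    {u v : ℝ → ℝ × ℝ} (hu : ∀ t, HasDerivAt u (G (u t)) t) (hv : ∀ t, HasDerivAt v (G (v t)) t)
    {t₀ : ℝ} (h : u t₀ = v t₀) (t : ℝ) : u t = v t := by
  have h1 : min t₀ t - 1 < t₀ := by have := min_le_left t₀ t; linarith
  have h2 : t₀ < max t₀ t + 1 := by have := le_max_left t₀ t; linarith
  have h3 : min t₀ t - 1 < t := by have := min_le_right t₀ t; linarith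
  have h4 : t < max t₀ t + 1 := by have := le_max_right t₀ t; linarith
  exact ODE_solution_unique_of_mem_Ioo (v := fun _ => G) (s := fun _ => Set.univ)
    (fun _ _ => hG.lipschitzOnWith) (⟨h1, h2⟩ : t₀ ∈ Set.Ioo _ _)
    (fun s _ => ⟨hu s, trivial⟩) (fun s _ => ⟨hv s, trivial⟩) h ⟨h3, h4⟩

/-- a traveling-front profile `φ` (a `C²` solution of
`φ'' + cφ' + f(φ) = 0` with `φ(−∞) = 1 > φ > φ(+∞) = 0`) is strictly decreasing:
`φ' < 0` on `ℝ`. -/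
theorem front_profile_deriv_neg (f : ℝ → ℝ) (hf : ContDiffOn ℝ 1 f (Set.Icc 0 1))
    (hf0 : f 0 = 0) (hf1 : f 1 = 0) (c : ℝ) (φ : ℝ → ℝ) (hφ : ContDiff ℝ 2 φ)
    (heq : ∀ z : ℝ, deriv (deriv φ) z + c * deriv φ z + f (φ z) = 0)
    (hlim1 : Filter.Tendsto φ Filter.atBot (nhds 1))
    (hlim0 : Filter.Tendsto φ Filter.atTop (nhds 0))
    (hrange : ∀ z : ℝ, 0 < φ z ∧ φ z < 1) :
    ∀ z : ℝ, deriv φ z < 0 := by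
  -- basic differentiability facts
  have hφ1 : Differentiable ℝ φ := hφ.differentiable two_ne_zero
  have hφcont : Continuous φ := hφ1.continuous
  have hφd1 : ContDiff ℝ 1 (deriv φ) := by
    have h : ContDiff ℝ ((1 : ℕ) + 1) φ := by exact_mod_cast hφ
    exact (contDiff_succ_iff_deriv.mp h).2.2
  have hφd : Differentiable ℝ (deriv φ) := hφd1.differentiable one_ne_zero
  have hφ'cont : Continuous (deriv φ) := hφd.continuous
  have hd1 : ∀ z, HasDerivAt φ (deriv φ z) z := fun z => (hφ1 z).hasDerivAt
  have hd2 : ∀ z, HasDerivAt (deriv φ) (deriv (deriv φ) z) z := fun z => (hφd z).hasDerivAt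
  -- Lipschitz cutoff extension g of f
  obtain ⟨Kf, hKf⟩ : ∃ K : NNReal, LipschitzOnWith K f (Set.Icc (0:ℝ) 1) := by
    have hd : DifferentiableOn ℝ f (Set.Icc 0 1) := hf.differentiableOn one_ne_zero
    have hc : ContinuousOn (fderivWithin ℝ f (Set.Icc 0 1)) (Set.Icc 0 1) :=
      hf.continuousOn_fderivWithin (uniqueDiffOn_Icc zero_lt_one) le_rfl
    obtain ⟨C, hC⟩ := isCompact_Icc.exists_bound_of_continuousOn hc
    refine ⟨⟨max C 0, le_max_right _ _⟩,
      (convex_Icc 0 1).lipschitzOnWith_of_nnnorm_fderivWithin_le hd (fun x hx => ?_)⟩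
    refine NNReal.coe_le_coe.mp ?_
    exact le_trans (hC x hx) (le_max_left C 0)
  set g : ℝ → ℝ := fun u => f ((Set.projIcc (0:ℝ) 1 zero_le_one u : Set.Icc (0:ℝ) 1) : ℝ)
    with hgdef
  have hglip : LipschitzWith Kf g := by
    have := (lipschitzOnWith_iff_restrict.mp hKf).comp (LipschitzWith.projIcc zero_le_one)
    rw [mul_one] at this
    exact this
  have hgcont : Continuous g := hglip.continuous
  have hgeq : ∀ z, g (φ z) = f (φ z) := fun z => by
    rw [hgdef]
    simp only []
    rw [Set.projIcc_of_mem zero_le_one ⟨(hrange z).1.le, (hrange z).2.le⟩]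
  -- the vector field
  set G : ℝ × ℝ → ℝ × ℝ := fun x => (x.2, -c * x.2 - g x.1) with hGdef
  have hGlip : ∃ L : NNReal, LipschitzWith L G := by
    refine ⟨‖c‖₊ + Kf + 1, LipschitzWith.of_dist_le_mul fun x y => ?_⟩
    have h1 : dist x.1 y.1 ≤ dist x y := le_max_left _ _
    have h2 : dist x.2 y.2 ≤ dist x y := le_max_right _ _
    have hh : dist (g x.1) (g y.1) ≤ (Kf : ℝ) * dist x.1 y.1 := hglip.dist_le_mul _ _
    have hd0 : (0:ℝ) ≤ dist x y := dist_nonneg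
    have hKf0 : (0:ℝ) ≤ (Kf : ℝ) := Kf.coe_nonneg
    have hcoe : ((‖c‖₊ + Kf + 1 : NNReal) : ℝ) = |c| + (Kf:ℝ) + 1 := by
      push_cast [Real.norm_eq_abs]; ring
    rw [Prod.dist_eq (x := G x) (y := G y), hcoe]
    apply max_le
    · simp only [hGdef]
      nlinarith [abs_nonneg c]
    · simp only [hGdef]
      have key : dist (-c * x.2 - g x.1) (-c * y.2 - g y.1)
          ≤ |c| * dist x.2 y.2 + dist (g x.1) (g y.1) := by
        rw [Real.dist_eq, Real.dist_eq, Real.dist_eq]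
        have : -c * x.2 - g x.1 - (-c * y.2 - g y.1) = -c * (x.2 - y.2) + -(g x.1 - g y.1) := by
          ring
        rw [this]
        refine (abs_add_le _ _).trans ?_
        rw [abs_mul, abs_neg, abs_neg]
      nlinarith [abs_nonneg c]
  obtain ⟨L, hGL⟩ := hGlip
  -- φ and its derivative solve the system
  have hV : ∀ t, HasDerivAt (fun t => (φ t, deriv φ t)) (G (φ t, deriv φ t)) t := by
    intro t
    have h2 : deriv (deriv φ) t = -c * deriv φ t - g (φ t) := by
      rw [hgeq t]; linarith [heq t]
    have := (hd1 t).prodMk (h2 ▸ hd2 t)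
    simpa [hGdef] using this
  -- no repeated phase point
  have hrepkey : ∀ z1 z2, z1 < z2 → φ z1 = φ z2 → deriv φ z1 = deriv φ z2 → False := by
    intro z1 z2 hlt hval hder
    set T := z2 - z1 with hT
    have hTpos : 0 < T := by simp [hT]; linarith
    have hper : ∀ z, φ (z + T) = φ z := by
      have hV2 : ∀ z, HasDerivAt (fun z => (φ (z + T), deriv φ (z + T)))
          (G (φ (z + T), deriv φ (z + T))) z := by
        intro z
        have hin : HasDerivAt (fun z : ℝ => z + T) 1 z := (hasDerivAt_id z).add_const T
        have := (hV (z + T)).scomp z hin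
        rw [one_smul] at this
        exact this
      have h0 : (fun z => (φ (z + T), deriv φ (z + T))) z1 = (fun t => (φ t, deriv φ t)) z1 := by
        simp only []
        rw [show z1 + T = z2 by rw [hT]; ring]
        exact Prod.ext hval.symm hder.symm
      intro z
      have := ode_unique_global hGL hV2 hV h0 z
      exact (congrArg Prod.fst this)
    have hn : ∀ n : ℕ, φ (z1 + n * T) = φ z1 := by
      intro n
      induction n with
      | zero => simp
      | succ k ih =>
        have hstep : z1 + ((k : ℕ) + 1 : ℕ) * T = (z1 + k * T) + T := by push_cast; ring
        rw [hstep, hper, ih]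
    have htend : Tendsto (fun n : ℕ => z1 + n * T) atTop atTop := by
      apply tendsto_atTop_add_const_left
      exact Tendsto.atTop_mul_const hTpos tendsto_natCast_atTop_atTop
    have h2 := hlim0.comp htend
    have h3 : Tendsto (fun n : ℕ => φ (z1 + n * T)) atTop (nhds (φ z1)) := by
      have : (fun n : ℕ => φ (z1 + n * T)) = fun _ => φ z1 := funext hn
      rw [this]; exact tendsto_const_nhds
    exact absurd (tendsto_nhds_unique h3 h2) (ne_of_gt (hrange z1).1)
  have hrep : ∀ z1 z2, φ z1 = φ z2 → deriv φ z1 = deriv φ z2 → z1 = z2 := by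
    intro z1 z2 hval hder
    rcases lt_trichotomy z1 z2 with h | h | h
    · exact absurd (hrepkey z1 z2 h hval hder) (not_false)
    · exact h
    · exact absurd (hrepkey z2 z1 h hval.symm hder.symm) (not_false)
  -- at a critical point, f (φ z₀) ≠ 0
  have hcrit : ∀ z0, deriv φ z0 = 0 → f (φ z0) ≠ 0 := by
    intro z0 h0 hfa0
    have hGa : G (φ z0, (0:ℝ)) = 0 := by
      have : g (φ z0) = 0 := by rw [hgeq z0, hfa0]
      simp [hGdef, this, Prod.ext_iff]
    have hconst : ∀ t, HasDerivAt (fun _ : ℝ => (φ z0, (0:ℝ))) (G (φ z0, (0:ℝ))) t := by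
      intro t; rw [hGa]; exact hasDerivAt_const t _
    have h0' : (fun t => (φ t, deriv φ t)) z0 = (fun _ : ℝ => (φ z0, (0:ℝ))) z0 := by
      simp [h0]
    have hall : ∀ t, φ t = φ z0 := by
      intro t
      have := ode_unique_global hGL hV hconst h0' t
      exact congrArg Prod.fst this
    have h3 : Tendsto φ atTop (nhds (φ z0)) := by
      have : φ = fun _ => φ z0 := funext hall
      rw [this]; exact tendsto_const_nhds
    exact absurd (tendsto_nhds_unique h3 hlim0) (ne_of_gt (hrange z0).1)
  -- energy function
  set F : ℝ → ℝ := fun u => ∫ t in (0:ℝ)..u, g t with hFdef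
  have hF : ∀ b, HasDerivAt F (g b) b := by
    intro b
    exact intervalIntegral.integral_hasDerivAt_right (hgcont.intervalIntegrable _ _)
      (hgcont.stronglyMeasurable.stronglyMeasurableAtFilter) hgcont.continuousAt
  set E : ℝ → ℝ := fun t => (deriv φ t) ^ 2 / 2 + F (φ t) with hEdef
  have hE : ∀ z, HasDerivAt E (-c * (deriv φ z) ^ 2) z := by
    intro z
    have h1 : HasDerivAt (fun t => (deriv φ t) ^ 2 / 2)
        ((2 * deriv φ z ^ 1 * deriv (deriv φ) z) / 2) z := ((hd2 z).pow 2).div_const 2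
    have h2 : HasDerivAt (fun t => F (φ t)) (g (φ z) * deriv φ z) z :=
      (hF (φ z)).comp z (hd1 z)
    have hsum := h1.add h2
    have : (2 * deriv φ z ^ 1 * deriv (deriv φ) z) / 2 + g (φ z) * deriv φ z
        = -c * (deriv φ z) ^ 2 := by
      rw [hgeq z]
      linear_combination (deriv φ z) * heq z
    rw [← this]
    exact hsum
  have hEdiff : Differentiable ℝ E := fun z => (hE z).differentiableAt
  have hEanti : 0 ≤ c → Antitone E := by
    intro hc
    apply antitone_of_deriv_nonpos hEdiff
    intro z; rw [(hE z).deriv]; nlinarith [sq_nonneg (deriv φ z)]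
  have hEmono : c ≤ 0 → Monotone E := by
    intro hc
    apply monotone_of_deriv_nonneg hEdiff
    intro z; rw [(hE z).deriv]; nlinarith [sq_nonneg (deriv φ z)]
  -- a return to the level of a critical point kills the solution
  have hkill : ∀ w z', deriv φ w = 0 → φ z' = φ w →
      ((0 ≤ c ∧ w < z') ∨ (c ≤ 0 ∧ z' < w)) → False := by
    intro w z' hw hval hcase
    have hEw : E w = F (φ w) := by rw [hEdef]; simp [hw]
    have hEz : E z' = (deriv φ z') ^ 2 / 2 + F (φ w) := by rw [hEdef]; simp [hval]
    have hz'0 : deriv φ z' = 0 := by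
      have hle : E z' ≤ E w := by
        rcases hcase with ⟨hc0, hlt⟩ | ⟨hc0, hlt⟩
        · exact hEanti hc0 hlt.le
        · exact hEmono hc0 hlt.le
      rw [hEw, hEz] at hle
      nlinarith [sq_nonneg (deriv φ z')]
    have := hrep z' w hval (hz'0.trans hw.symm)
    rcases hcase with ⟨_, hlt⟩ | ⟨_, hlt⟩
    · exact absurd this (ne_of_gt hlt)
    · exact absurd this (ne_of_lt hlt)
  -- one-sided strict behaviour near a critical point
  have hleft : ∀ z0, deriv φ z0 = 0 → 0 < f (φ z0) → ∃ p < z0, φ p < φ z0 := by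
    intro z0 h0 hfa
    have hdd : deriv (deriv φ) z0 = -f (φ z0) := by
      have h := heq z0; rw [h0, mul_zero] at h; linarith
    have hslope : Tendsto (slope (deriv φ) z0) (𝓝[≠] z0) (𝓝 (-f (φ z0))) := by
      rw [← hdd]; exact hasDerivAt_iff_tendsto_slope.mp (hd2 z0)
    have hev : ∀ᶠ z in 𝓝[≠] z0, slope (deriv φ) z0 z < 0 :=
      hslope.eventually_lt_const (by linarith)
    have hev2 : ∀ᶠ z in 𝓝[<] z0, slope (deriv φ) z0 z < 0 :=
      hev.filter_mono (nhdsWithin_mono z0 fun x hx => ne_of_lt hx)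
    obtain ⟨l, hl, hsub⟩ := mem_nhdsLT_iff_exists_Ioo_subset.mp hev2
    have hpos : ∀ z ∈ Set.Ioo l z0, 0 < deriv φ z := by
      intro z hz
      have hs : slope (deriv φ) z0 z < 0 := hsub hz
      rw [slope_def_field, h0, sub_zero] at hs
      have hzneg : z - z0 < 0 := by linarith [hz.2]
      by_contra hcon
      push_neg at hcon
      have : 0 ≤ deriv φ z / (z - z0) := div_nonneg_of_nonpos hcon hzneg.le
      linarith
    have hlz : l < z0 := hl
    have hmono : StrictMonoOn φ (Set.Icc l z0) :=
      strictMonoOn_of_deriv_pos (convex_Icc l z0) hφcont.continuousOn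
        (by rw [interior_Icc]; exact hpos)
    refine ⟨(l + z0) / 2, by linarith, ?_⟩
    exact hmono (Set.mem_Icc.mpr ⟨by linarith, by linarith⟩)
      (Set.mem_Icc.mpr ⟨hlz.le, le_refl z0⟩) (by linarith)
  have hright : ∀ z0, deriv φ z0 = 0 → f (φ z0) < 0 → ∃ q, z0 < q ∧ φ z0 < φ q := by
    intro z0 h0 hfa
    have hdd : deriv (deriv φ) z0 = -f (φ z0) := by
      have h := heq z0; rw [h0, mul_zero] at h; linarith
    have hslope : Tendsto (slope (deriv φ) z0) (𝓝[≠] z0) (𝓝 (-f (φ z0))) := by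
      rw [← hdd]; exact hasDerivAt_iff_tendsto_slope.mp (hd2 z0)
    have hev : ∀ᶠ z in 𝓝[≠] z0, 0 < slope (deriv φ) z0 z :=
      hslope.eventually_const_lt (by linarith)
    have hev2 : ∀ᶠ z in 𝓝[>] z0, 0 < slope (deriv φ) z0 z :=
      hev.filter_mono (nhdsWithin_mono z0 fun x hx => ne_of_gt hx)
    obtain ⟨r, hr, hsub⟩ := mem_nhdsGT_iff_exists_Ioo_subset.mp hev2
    have hpos : ∀ z ∈ Set.Ioo z0 r, 0 < deriv φ z := by
      intro z hz
      have hs : 0 < slope (deriv φ) z0 z := hsub hz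
      rw [slope_def_field, h0, sub_zero] at hs
      have hzpos : 0 < z - z0 := by linarith [hz.1]
      by_contra hcon
      push_neg at hcon
      have : deriv φ z / (z - z0) ≤ 0 := div_nonpos_iff.mpr (Or.inr ⟨hcon, hzpos.le⟩)
      linarith
    have hrz : z0 < r := hr
    have hmono : StrictMonoOn φ (Set.Icc z0 r) :=
      strictMonoOn_of_deriv_pos (convex_Icc z0 r) hφcont.continuousOn
        (by rw [interior_Icc]; exact hpos)
    refine ⟨(z0 + r) / 2, by linarith, ?_⟩
    exact hmono (Set.mem_Icc.mpr ⟨le_refl z0, hrz.le⟩)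
      (Set.mem_Icc.mpr ⟨by linarith, by linarith⟩) (by linarith)
  -- no critical point at all
  have hnc : ∀ z, deriv φ z ≠ 0 := by
    intro z0 h0
    rcases le_total 0 c with hc | hc
    · rcases (hcrit z0 h0).lt_or_gt with hfa | hfa
      · -- 0 ≤ c, strict local min
        obtain ⟨q, hq, hqa⟩ := hright z0 h0 hfa
        obtain ⟨Z, hZ1, hZ2⟩ :=
          ((hlim0.eventually_lt_const (hrange z0).1).and (eventually_gt_atTop q)).exists
        obtain ⟨z3, hz3mem, hz3⟩ := intermediate_value_Icc' hZ2.le hφcont.continuousOn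
          (⟨hZ1.le, hqa.le⟩ : φ z0 ∈ Set.Icc (φ Z) (φ q))
        exact hkill z0 z3 h0 hz3 (Or.inl ⟨hc, lt_of_lt_of_le hq hz3mem.1⟩)
      · -- 0 ≤ c, strict local max
        obtain ⟨p, hp, hpa⟩ := hleft z0 h0 hfa
        obtain ⟨z', hz'1, hz'2⟩ :=
          ((hlim1.eventually_const_lt (hrange z0).2).and (eventually_lt_atBot p)).exists
        have hz'z0 : z' ≤ z0 := (hz'2.trans hp).le
        obtain ⟨w, hwmem, hwmin⟩ :=
          isCompact_Icc.exists_isMinOn (Set.nonempty_Icc.mpr hz'z0) hφcont.continuousOn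
        rw [isMinOn_iff] at hwmin
        have hwp : φ w ≤ φ p := hwmin p ⟨hz'2.le, hp.le⟩
        have hwlt : φ w < φ z0 := lt_of_le_of_lt hwp hpa
        have hw1 : z' < w := by
          rcases lt_or_eq_of_le hwmem.1 with h | h
          · exact h
          · exfalso; rw [← h] at hwlt; linarith
        have hw2 : w < z0 := by
          rcases lt_or_eq_of_le hwmem.2 with h | h
          · exact h
          · exfalso; rw [h] at hwlt; exact lt_irrefl _ hwlt
        have hw0 : deriv φ w = 0 :=
          ((isMinOn_iff.mpr hwmin).isLocalMin (Icc_mem_nhds hw1 hw2)).deriv_eq_zero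
        obtain ⟨Z, hZ1, hZ2⟩ :=
          ((hlim0.eventually_lt_const (hrange w).1).and (eventually_gt_atTop z0)).exists
        obtain ⟨z3, hz3mem, hz3⟩ := intermediate_value_Icc' hZ2.le hφcont.continuousOn
          (⟨hZ1.le, hwlt.le⟩ : φ w ∈ Set.Icc (φ Z) (φ z0))
        exact hkill w z3 hw0 hz3 (Or.inl ⟨hc, lt_of_lt_of_le hw2 hz3mem.1⟩)
    · rcases (hcrit z0 h0).lt_or_gt with hfa | hfa
      · -- c ≤ 0, strict local min
        obtain ⟨q, hq, hqa⟩ := hright z0 h0 hfa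
        obtain ⟨Z, hZ1, hZ2⟩ :=
          ((hlim0.eventually_lt_const (hrange z0).1).and (eventually_gt_atTop q)).exists
        have hz0Z : z0 ≤ Z := (hq.trans hZ2).le
        obtain ⟨w, hwmem, hwmax⟩ :=
          isCompact_Icc.exists_isMaxOn (Set.nonempty_Icc.mpr hz0Z) hφcont.continuousOn
        rw [isMaxOn_iff] at hwmax
        have hwq : φ q ≤ φ w := hwmax q ⟨hq.le, hZ2.le⟩
        have hwgt : φ z0 < φ w := lt_of_lt_of_le hqa hwq
        have hw1 : z0 < w := by
          rcases lt_or_eq_of_le hwmem.1 with h | h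
          · exact h
          · exfalso; rw [← h] at hwgt; exact lt_irrefl _ hwgt
        have hw2 : w < Z := by
          rcases lt_or_eq_of_le hwmem.2 with h | h
          · exact h
          · exfalso; rw [h] at hwgt; linarith
        have hw0 : deriv φ w = 0 :=
          ((isMaxOn_iff.mpr hwmax).isLocalMax (Icc_mem_nhds hw1 hw2)).deriv_eq_zero
        obtain ⟨z'', hz''1, hz''2⟩ :=
          ((hlim1.eventually_const_lt (hrange w).2).and (eventually_lt_atBot z0)).exists
        obtain ⟨z4, hz4mem, hz4⟩ := intermediate_value_Icc' hz''2.le hφcont.continuousOn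
          (⟨hwgt.le, hz''1.le⟩ : φ w ∈ Set.Icc (φ z0) (φ z''))
        exact hkill w z4 hw0 hz4 (Or.inr ⟨hc, lt_of_le_of_lt hz4mem.2 hw1⟩)
      · -- c ≤ 0, strict local max
        obtain ⟨p, hp, hpa⟩ := hleft z0 h0 hfa
        obtain ⟨z', hz'1, hz'2⟩ :=
          ((hlim1.eventually_const_lt (hrange z0).2).and (eventually_lt_atBot p)).exists
        obtain ⟨z4, hz4mem, hz4⟩ := intermediate_value_Icc' hz'2.le hφcont.continuousOn
          (⟨hpa.le, hz'1.le⟩ : φ z0 ∈ Set.Icc (φ p) (φ z'))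
        exact hkill z0 z4 h0 hz4 (Or.inr ⟨hc, lt_of_le_of_lt hz4mem.2 hp⟩)
  -- conclude: the derivative is everywhere negative
  intro z
  rcases (hnc z).lt_or_gt with h | h
  · exact h
  · exfalso
    obtain ⟨Z, hZ1, hZ2⟩ :=
      ((hlim0.eventually_lt_const (hrange z).1).and (eventually_gt_atTop z)).exists
    obtain ⟨ξ, hξmem, hξ⟩ := exists_hasDerivAt_eq_slope φ (deriv φ) hZ2
      hφcont.continuousOn (fun x _ => hd1 x)
    have hξneg : deriv φ ξ < 0 := by
      rw [hξ]
      apply div_neg_of_neg_of_pos <;> linarith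
    obtain ⟨y, hymem, hy⟩ := intermediate_value_Icc' hξmem.1.le hφ'cont.continuousOn
      (⟨hξneg.le, h.le⟩ : (0:ℝ) ∈ Set.Icc (deriv φ ξ) (deriv φ z))
    exact hnc y hy
end

section
/- Let φ ∈ C²(ℝ) and c ∈ ℝ satisfy φ'' + cφ' + f(φ) = 0 on ℝ together with φ(−∞) = 1 > φ(z) > φ(+∞) = 0 for all z ∈ ℝ, where f ∈ C¹([0,1]) with f(0) = f(1) = 0. Then c > 0 if and only if ∫₀¹ f(s) ds > 0. -/
open Filter Topology intervalIntegral MeasureTheory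

/-- for a traveling-front profile `φ` with speed `c` (a `C²` solution of
`φ'' + cφ' + f(φ) = 0` with `φ(−∞) = 1 > φ > φ(+∞) = 0`), one has
`c > 0 ↔ ∫₀¹ f(s) ds > 0`. -/
theorem front_speed_pos_iff_integral_pos (f : ℝ → ℝ)
    (hf : ContDiffOn ℝ 1 f (Set.Icc 0 1)) (hf0 : f 0 = 0) (hf1 : f 1 = 0)
    (c : ℝ) (φ : ℝ → ℝ) (hφ : ContDiff ℝ 2 φ)
    (heq : ∀ z : ℝ, deriv (deriv φ) z + c * deriv φ z + f (φ z) = 0)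
    (hlim1 : Filter.Tendsto φ Filter.atBot (nhds 1))
    (hlim0 : Filter.Tendsto φ Filter.atTop (nhds 0))
    (hrange : ∀ z : ℝ, 0 < φ z ∧ φ z < 1) :
    0 < c ↔ 0 < ∫ s in (0:ℝ)..1, f s := by
  -- smoothness facts
  set ψ := deriv φ with hψdef
  have hs := (contDiff_succ_iff_deriv (n := 1)).mp (by exact_mod_cast hφ)
  have hφd : Differentiable ℝ φ := hs.1
  have hψ1 : ContDiff ℝ 1 ψ := hs.2.2
  have hψd : Differentiable ℝ ψ := hψ1.differentiable one_ne_zero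
  have hψc : Continuous ψ := hψd.continuous
  have hφc : Continuous φ := hφd.continuous
  have hfc : ContinuousOn f (Set.Icc 0 1) := hf.continuousOn
  -- the primitive F
  set F : ℝ → ℝ := fun u => ∫ s in (0:ℝ)..u, f s with hFdef
  have hFd : ∀ z : ℝ, HasDerivAt F (f (φ z)) (φ z) := by
    intro z
    obtain ⟨h0, h1⟩ := hrange z
    have hmem : Set.Icc (0:ℝ) 1 ∈ 𝓝 (φ z) := Icc_mem_nhds h0 h1
    have hca : ContinuousAt f (φ z) := hfc.continuousAt hmem
    have hsub : Set.uIcc (0:ℝ) (φ z) ⊆ Set.Icc 0 1 := by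
      rw [Set.uIcc_of_le h0.le]; exact Set.Icc_subset_Icc_right h1.le
    have hint : IntervalIntegrable f volume 0 (φ z) :=
      (hfc.mono hsub).intervalIntegrable
    have hmeas : StronglyMeasurableAtFilter f (𝓝 (φ z)) volume :=
      ⟨Set.Icc 0 1, hmem, hfc.aestronglyMeasurable measurableSet_Icc⟩
    exact intervalIntegral.integral_hasDerivAt_right hint hmeas hca
  -- the energy
  set E : ℝ → ℝ := fun z => (ψ z) ^ 2 / 2 + F (φ z) with hEdef
  have hE : ∀ z : ℝ, HasDerivAt E (-(c * ψ z ^ 2)) z := by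
    intro z
    have h1 : HasDerivAt ψ (deriv ψ z) z := (hψd z).hasDerivAt
    have hsq : HasDerivAt (fun z => ψ z ^ 2 / 2) (ψ z * deriv ψ z) z := by
      have := (h1.pow 2).div_const 2
      exact this.congr_deriv (by push_cast; ring)
    have hcomp : HasDerivAt (fun z => F (φ z)) (f (φ z) * ψ z) z :=
      (hFd z).comp z ((hφd z).hasDerivAt)
    have := hsq.add hcomp
    refine this.congr_deriv (Eq.symm ?_)
    have h := heq z
    have hdd : deriv (deriv φ) z = deriv ψ z := rfl
    rw [hdd] at h
    linear_combination (-(ψ z)) * h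
  -- energy identity
  set J : ℝ → ℝ → ℝ := fun a b => ∫ x in a..b, ψ x ^ 2 with hJdef
  have hψ2c : Continuous fun x => ψ x ^ 2 := hψc.pow 2
  have hkeyid : ∀ a b : ℝ, c * J a b = E a - E b := by
    intro a b
    have h1 : ∫ x in a..b, -(c * ψ x ^ 2) = E b - E a :=
      integral_eq_sub_of_hasDerivAt (fun x _ => hE x)
        (((continuous_const.mul hψ2c).neg).intervalIntegrable a b)
    have h2 : ∫ x in a..b, -(c * ψ x ^ 2) = -(c * ∫ x in a..b, ψ x ^ 2) := by
      rw [intervalIntegral.integral_neg, intervalIntegral.integral_const_mul]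
    rw [h2] at h1
    simp only [hJdef]
    linarith
  -- sequences from MVT
  have hbpick : ∀ n : ℕ, ∃ x ∈ Set.Ioo (n : ℝ) (n + 1),
      deriv φ x = (φ (n + 1) - φ n) / ((n + 1) - n) := fun n =>
    exists_deriv_eq_slope φ (by linarith) hφc.continuousOn hφd.differentiableOn
  choose b hbmem hbval using hbpick
  have hapick : ∀ n : ℕ, ∃ x ∈ Set.Ioo (-(n : ℝ) - 1) (-n),
      deriv φ x = (φ (-n) - φ (-(n : ℝ) - 1)) / ((-n) - (-(n : ℝ) - 1)) := fun n =>
    exists_deriv_eq_slope φ (by linarith) hφc.continuousOn hφd.differentiableOn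
  choose a hamem haval using hapick
  have hbval' : ∀ n : ℕ, ψ (b n) = φ (n + 1) - φ n := by
    intro n; rw [hψdef, hbval n]; field_simp; ring
  have haval' : ∀ n : ℕ, ψ (a n) = φ (-n) - φ (-(n : ℝ) - 1) := by
    intro n; rw [hψdef, haval n]; field_simp; ring
  -- limits of the sequences
  have hNtop : Tendsto (fun n : ℕ => (n : ℝ)) atTop atTop := tendsto_natCast_atTop_atTop
  have hbtop : Tendsto b atTop atTop :=
    tendsto_atTop_mono (fun n => (hbmem n).1.le) hNtop
  have hNbot : Tendsto (fun n : ℕ => -(n : ℝ)) atTop atBot :=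
    tendsto_neg_atTop_atBot.comp hNtop
  have habot : Tendsto a atTop atBot :=
    tendsto_atBot_mono (fun n => (hamem n).2.le) hNbot
  have hφb : Tendsto (fun n => φ (b n)) atTop (𝓝 0) := hlim0.comp hbtop
  have hφa : Tendsto (fun n => φ (a n)) atTop (𝓝 1) := hlim1.comp habot
  have hψb : Tendsto (fun n => ψ (b n)) atTop (𝓝 0) := by
    have h1 : Tendsto (fun n : ℕ => φ n) atTop (𝓝 0) := hlim0.comp hNtop
    have h2 : Tendsto (fun n : ℕ => φ (n + 1)) atTop (𝓝 0) :=
      hlim0.comp (tendsto_atTop_add_const_right _ 1 hNtop)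
    have := h2.sub h1
    rw [sub_zero] at this
    exact this.congr (fun n => (hbval' n).symm)
  have hψa : Tendsto (fun n => ψ (a n)) atTop (𝓝 0) := by
    have h1 : Tendsto (fun n : ℕ => φ (-n)) atTop (𝓝 1) := hlim1.comp hNbot
    have h2 : Tendsto (fun n : ℕ => φ (-(n : ℝ) - 1)) atTop (𝓝 1) := by
      refine hlim1.comp ?_
      exact tendsto_atBot_add_const_right _ (-1) hNbot |>.congr (fun n => by ring)
    have := h1.sub h2
    rw [sub_self] at this
    exact this.congr (fun n => (haval' n).symm)
  -- continuity of F on [0,1]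
  have hFcont : ContinuousOn F (Set.Icc 0 1) := by
    have : Set.uIcc (0:ℝ) 1 = Set.Icc 0 1 := Set.uIcc_of_le zero_le_one
    rw [← this]
    exact intervalIntegral.continuousOn_primitive_interval
      ((hfc.mono this.subset).integrableOn_compact isCompact_uIcc)
  have hmemIcc : ∀ z : ℝ, φ z ∈ Set.Icc (0:ℝ) 1 := fun z =>
    ⟨(hrange z).1.le, (hrange z).2.le⟩
  have hFφb : Tendsto (fun n => F (φ (b n))) atTop (𝓝 (F 0)) := by
    have h0 : (0:ℝ) ∈ Set.Icc (0:ℝ) 1 := ⟨le_rfl, zero_le_one⟩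
    exact (hFcont 0 h0).tendsto.comp
      (tendsto_nhdsWithin_of_tendsto_nhds_of_eventually_within _ hφb
        (Eventually.of_forall fun n => hmemIcc (b n)))
  have hFφa : Tendsto (fun n => F (φ (a n))) atTop (𝓝 (F 1)) := by
    have h1 : (1:ℝ) ∈ Set.Icc (0:ℝ) 1 := ⟨zero_le_one, le_rfl⟩
    exact (hFcont 1 h1).tendsto.comp
      (tendsto_nhdsWithin_of_tendsto_nhds_of_eventually_within _ hφa
        (Eventually.of_forall fun n => hmemIcc (a n)))
  -- the key limit
  have hF0 : F 0 = 0 := intervalIntegral.integral_same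
  have hEb : Tendsto (fun n => E (b n)) atTop (𝓝 0) := by
    have := (((hψb.pow 2).div_const 2).add hFφb)
    simpa [hEdef, hF0] using this
  have hEa : Tendsto (fun n => E (a n)) atTop (𝓝 (F 1)) := by
    have := (((hψa.pow 2).div_const 2).add hFφa)
    simpa [hEdef] using this
  have hkey : Tendsto (fun n => c * J (a n) (b n)) atTop (𝓝 (F 1)) := by
    have := hEa.sub hEb
    rw [sub_zero] at this
    exact this.congr (fun n => (hkeyid (a n) (b n)).symm)
  have hIeq : F 1 = ∫ s in (0:ℝ)..1, f s := rfl
  rcases eq_or_ne c 0 with hc0 | hc0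
  · -- c = 0 : the integral is 0
    have h0 : Tendsto (fun n : ℕ => c * J (a n) (b n)) atTop (𝓝 0) := by
      simp [hc0]
    have hI0 : F 1 = 0 := tendsto_nhds_unique hkey h0
    rw [← hIeq, hI0, hc0]
  · -- c ≠ 0
    have hJlim : Tendsto (fun n => J (a n) (b n)) atTop (𝓝 (F 1 / c)) := by
      have := hkey.div_const c
      exact this.congr (fun n => by rw [mul_div_cancel_left₀ _ hc0])
    -- there is a point where ψ ≠ 0
    have hx : ∃ x, ψ x ≠ 0 := by
      by_contra h
      push_neg at h
      have hconst := is_const_of_deriv_eq_zero hφd h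
      have : Tendsto (fun _ : ℝ => φ 0) atTop (𝓝 0) :=
        hlim0.congr (fun x => hconst x 0)
      have h00 : φ 0 = 0 := tendsto_nhds_unique tendsto_const_nhds this
      exact absurd h00 (ne_of_gt (hrange 0).1)
    obtain ⟨x₀, hx₀⟩ := hx
    have hx2 : 0 < ψ x₀ ^ 2 := by positivity
    have hev : {x | 0 < ψ x ^ 2} ∈ 𝓝 x₀ :=
      (hψ2c.continuousAt).preimage_mem_nhds (Ioi_mem_nhds hx2)
    obtain ⟨l, u, hlu, hsub⟩ := mem_nhds_iff_exists_Ioo_subset.mp hev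
    have hlu' : l < u := lt_trans hlu.1 hlu.2
    have hpos : 0 < ∫ x in l..u, ψ x ^ 2 :=
      intervalIntegral_pos_of_pos_on (hψ2c.intervalIntegrable l u)
        (fun x hx => hsub hx) hlu'
    have hevle : ∀ᶠ n in atTop, ∫ x in l..u, ψ x ^ 2 ≤ J (a n) (b n) := by
      filter_upwards [habot.eventually_le_atBot l, hbtop.eventually_ge_atTop u] with n hal hub
      exact intervalIntegral.integral_mono_interval hal hlu'.le hub
        (Eventually.of_forall fun x => sq_nonneg _)
        (hψ2c.intervalIntegrable _ _)
    have hge : ∫ x in l..u, ψ x ^ 2 ≤ F 1 / c := ge_of_tendsto hJlim hevle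
    have hdiv : 0 < F 1 / c := lt_of_lt_of_le hpos hge
    rw [← hIeq]
    rcases div_pos_iff.mp hdiv with ⟨hI, hc⟩ | ⟨hI, hc⟩
    · exact iff_of_true hc hI
    · exact iff_of_false (not_lt.mpr hc.le) (not_lt.mpr hI.le)
end

section
/- Suppose f ∈ C¹([0,1]), f(0) = f(1) = 0, and there exist c₀ > 0 and φ₀ ∈ C²(ℝ) solving φ₀'' + c₀φ₀' + f(φ₀) = 0 with φ₀(−∞) = 1 > φ₀ > φ₀(+∞) = 0. Then ∫_t¹ f(s) ds > 0 for every t ∈ [0,1). -/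
open Filter Topology Set MeasureTheory

/-- if the equation admits a traveling front connecting `1` to `0` with
positive speed `c₀`, then `∫_t¹ f(s) ds > 0` for every `t ∈ [0,1)`. -/
theorem integral_pos_of_front (f : ℝ → ℝ) (hf : ContDiffOn ℝ 1 f (Set.Icc 0 1))
    (hf0 : f 0 = 0) (hf1 : f 1 = 0) (c₀ : ℝ) (hc₀ : 0 < c₀)
    (φ₀ : ℝ → ℝ) (hφ : ContDiff ℝ 2 φ₀)
    (heq : ∀ z : ℝ, deriv (deriv φ₀) z + c₀ * deriv φ₀ z + f (φ₀ z) = 0)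
    (hlim1 : Filter.Tendsto φ₀ Filter.atBot (nhds 1))
    (hlim0 : Filter.Tendsto φ₀ Filter.atTop (nhds 0))
    (hrange : ∀ z : ℝ, 0 < φ₀ z ∧ φ₀ z < 1) :
    ∀ t ∈ Set.Ico (0:ℝ) 1, 0 < ∫ s in t..1, f s := by
  have hφd : Differentiable ℝ φ₀ := hφ.differentiable two_ne_zero
  have hφc : Continuous φ₀ := hφd.continuous
  have hφ' : ContDiff ℝ 1 (deriv φ₀) := by
    have h : ContDiff ℝ ((1:ℕ∞)+1) φ₀ := by exact_mod_cast hφ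
    exact_mod_cast (contDiff_succ_iff_deriv.mp h).2.2
  set D := deriv φ₀ with hDdef
  have hDd : Differentiable ℝ D := hφ'.differentiable one_ne_zero
  have hDc : Continuous D := hDd.continuous
  have hD2 : ∀ z, deriv D z = -(c₀ * D z) - f (φ₀ z) := fun z => by
    have := heq z; linarith
  have hfc : ContinuousOn f (Icc 0 1) := hf.continuousOn
  have hmemI : ∀ z, φ₀ z ∈ Icc (0:ℝ) 1 := fun z => ⟨(hrange z).1.le, (hrange z).2.le⟩
  have hfint : ∀ u v : ℝ, u ∈ Icc (0:ℝ) 1 → v ∈ Icc (0:ℝ) 1 →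
      IntervalIntegrable f volume u v := fun u v hu hv =>
    (hfc.mono (uIcc_subset_Icc hu hv)).intervalIntegrable
  set G : ℝ → ℝ := fun u => ∫ s in u..1, f s with hGdef
  have hG1 : G 1 = 0 := intervalIntegral.integral_same
  have hGcont : ContinuousOn G (Icc 0 1) := by
    have h1 : IntegrableOn f (uIcc (0:ℝ) 1) volume := by
      rw [uIcc_of_le zero_le_one]
      exact (hfc.integrableOn_Icc)
    have := intervalIntegral.continuousOn_primitive_interval_left (f := f) (μ := volume)
      (a := 0) (b := 1) h1
    rwa [uIcc_of_le zero_le_one] at this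
  -- derivative of G on (0,1)
  have hGderiv : ∀ u ∈ Ioo (0:ℝ) 1, HasDerivAt G (-(f u)) u := by
    intro u hu
    have hcu : ContinuousAt f u := hfc.continuousAt (Icc_mem_nhds hu.1 hu.2)
    have hmeas : StronglyMeasurableAtFilter f (𝓝 u) volume :=
      ⟨Ioo 0 1, Ioo_mem_nhds hu.1 hu.2,
        (hfc.mono Ioo_subset_Icc_self).aestronglyMeasurable measurableSet_Ioo⟩
    have h1 : HasDerivAt (fun v => ∫ s in (1:ℝ)..v, f s) (f u) u :=
      intervalIntegral.integral_hasDerivAt_right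
        (hfint 1 u ⟨zero_le_one, le_rfl⟩ ⟨hu.1.le, hu.2.le⟩) hmeas hcu
    have h2 : HasDerivAt (fun v => -∫ s in (1:ℝ)..v, f s) (-(f u)) u := h1.neg
    have hEq : G = fun v => -∫ s in (1:ℝ)..v, f s := by
      funext v
      show (∫ s in v..1, f s) = -∫ s in (1:ℝ)..v, f s
      rw [intervalIntegral.integral_symm]
    rw [hEq]
    exact h2
  have hGφ : ∀ z, HasDerivAt (fun z => G (φ₀ z)) (-(f (φ₀ z)) * D z) z := fun z =>
    (hGderiv _ ⟨(hrange z).1, (hrange z).2⟩).comp z (hφd z).hasDerivAt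
  set E : ℝ → ℝ := fun z => D z ^ 2 / 2 - G (φ₀ z) with hEdef
  have hEeq : ∀ z, E z = D z ^ 2 / 2 - G (φ₀ z) := fun z => rfl
  have hE : ∀ z, HasDerivAt E (-(c₀ * D z ^ 2)) z := by
    intro z
    have h1 : HasDerivAt (fun z => D z ^ 2 / 2) (2 * D z ^ 1 * deriv D z / 2) z :=
      (((hDd z).hasDerivAt.pow 2)).div_const 2
    have h2 := (h1.sub (hGφ z))
    refine h2.congr_deriv ?_
    rw [hD2 z]; ring
  have hEanti : Antitone E := by
    apply antitone_of_deriv_nonpos (fun z => (hE z).differentiableAt)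
    intro z
    rw [(hE z).deriv]
    nlinarith [sq_nonneg (D z)]
  have hEftc : ∀ a b : ℝ, E b - E a = -(c₀ * ∫ z in a..b, D z ^ 2) := by
    intro a b
    have hint : IntervalIntegrable (fun z => -(c₀ * D z ^ 2)) volume a b :=
      ((continuous_const.mul (hDc.pow 2)).neg).intervalIntegrable a b
    have := intervalIntegral.integral_eq_sub_of_hasDerivAt (fun z _ => hE z) hint
    rw [← this, intervalIntegral.integral_neg, intervalIntegral.integral_const_mul]
  have hD2int : ∀ a b : ℝ, IntervalIntegrable (fun z => D z ^ 2) volume a b :=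
    fun a b => (hDc.pow 2).intervalIntegrable a b
  -- limits of G ∘ φ₀
  have hGφtop : Tendsto (fun z => G (φ₀ z)) atTop (𝓝 (G 0)) := by
    have h0 : Tendsto φ₀ atTop (𝓝[Icc (0:ℝ) 1] 0) :=
      tendsto_nhdsWithin_of_tendsto_nhds_of_eventually_within _ hlim0
        (Eventually.of_forall hmemI)
    exact (hGcont 0 ⟨le_rfl, zero_le_one⟩).tendsto.comp h0
  have hGφbot : Tendsto (fun z => G (φ₀ z)) atBot (𝓝 0) := by
    have h0 : Tendsto φ₀ atBot (𝓝[Icc (0:ℝ) 1] 1) :=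
      tendsto_nhdsWithin_of_tendsto_nhds_of_eventually_within _ hlim1
        (Eventually.of_forall hmemI)
    have := (hGcont 1 ⟨zero_le_one, le_rfl⟩).tendsto.comp h0
    rwa [hG1] at this
  -- FTC for φ₀
  have hφftc : ∀ a b : ℝ, φ₀ b - φ₀ a = ∫ z in a..b, D z := by
    intro a b
    exact (intervalIntegral.integral_deriv_eq_sub (fun x _ => hφd x)
      (hDc.intervalIntegrable a b)).symm
  -- Step A: -(G 0) ≤ E z
  have stepA : ∀ z, -(G 0) ≤ E z := by
    intro z₀
    have hev : ∀ᶠ z in atTop, -(G (φ₀ z)) ≤ E z₀ := by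
      rw [eventually_atTop]
      refine ⟨z₀, fun z hz => le_trans ?_ (hEanti hz)⟩
      rw [hEeq z]
      nlinarith [sq_nonneg (D z)]
    exact le_of_tendsto hGφtop.neg hev
  -- Step B: E z ≤ 0
  have stepB : ∀ z, E z ≤ 0 := by
    intro z₀
    by_contra hcon
    push_neg at hcon
    obtain ⟨ε, hεdef⟩ : ∃ ε, ε = E z₀ := ⟨_, rfl⟩
    have hε : (0:ℝ) < ε := hεdef ▸ hcon
    -- find W with D w ^ 2 ≥ ε for all w ≤ W
    have hc2' : -ε / 2 < 0 := by linarith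
    have hev : ∀ᶠ w in atBot, -ε / 2 < G (φ₀ w) :=
      hGφbot.eventually (eventually_gt_nhds hc2')
    obtain ⟨W₀, hW₀⟩ := eventually_atBot.mp hev
    set W := min W₀ z₀ with hWdef
    have hsq : ∀ w ≤ W, ε ≤ D w ^ 2 := by
      intro w hw
      have h1 : E z₀ ≤ E w := hEanti (hw.trans (min_le_right _ _))
      rw [hEeq w, ← hεdef] at h1
      have h2 : -ε / 2 < G (φ₀ w) := hW₀ w (hw.trans (min_le_left _ _))
      nlinarith
    set c := Real.sqrt ε with hcdef
    have hc : 0 < c := Real.sqrt_pos.mpr hε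
    have hc2 : c ^ 2 = ε := Real.sq_sqrt hε.le
    have habs : ∀ w ≤ W, c ≤ |D w| := by
      intro w hw
      rw [← Real.sqrt_sq_eq_abs, hcdef]
      exact Real.sqrt_le_sqrt (hsq w hw)
    have hsign : (∀ w ≤ W, c ≤ D w) ∨ (∀ w ≤ W, D w ≤ -c) := by
      by_contra h'
      push_neg at h'
      obtain ⟨⟨a, ha, ha'⟩, ⟨b, hb, hb'⟩⟩ := h'
      have hDa : D a ≤ -c := by
        rcases le_abs.mp (habs a ha) with h | h
        · linarith
        · linarith
      have hDb : c ≤ D b := by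
        rcases le_abs.mp (habs b hb) with h | h
        · exact h
        · linarith
      have h0 : (0:ℝ) ∈ uIcc (D a) (D b) := by
        rw [Set.mem_uIcc]
        left; constructor <;> linarith
      obtain ⟨x, hx, hx0⟩ := intermediate_value_uIcc hDc.continuousOn h0
      have hxW : x ≤ W := by
        rcases Set.mem_uIcc.mp hx with ⟨_, h2⟩ | ⟨_, h2⟩
        · exact h2.trans hb
        · exact h2.trans ha
      have := habs x hxW
      rw [hx0] at this
      simp at this
      linarith
    rcases hsign with hpos | hneg
    · -- D ≥ c on Iic W : φ₀ drops below 0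
      set w := W - 1 / c with hwdef
      have hw : w ≤ W := by
        rw [hwdef]; have : 0 < 1 / c := by positivity
        linarith
      have hint : c * (W - w) ≤ ∫ z in w..W, D z := by
        have hm := intervalIntegral.integral_mono_on hw
          (intervalIntegrable_const : IntervalIntegrable (fun _ => c) volume w W)
          (hDc.intervalIntegrable w W)
          (fun x hx => hpos x hx.2)
        rw [intervalIntegral.integral_const, smul_eq_mul] at hm
        linarith [hm]
      have hWw : c * (W - w) = 1 := by
        rw [hwdef]; field_simp; ring
      have h1 := hφftc w W
      have h2 := (hrange w).1
      have h3 := (hrange W).2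
      nlinarith
    · set w := W - 1 / c with hwdef
      have hw : w ≤ W := by
        rw [hwdef]; have : 0 < 1 / c := by positivity
        linarith
      have hint : ∫ z in w..W, D z ≤ (-c) * (W - w) := by
        have hm := intervalIntegral.integral_mono_on hw
          (hDc.intervalIntegrable w W)
          (intervalIntegrable_const : IntervalIntegrable (fun _ => -c) volume w W)
          (fun x hx => hneg x hx.2)
        rw [intervalIntegral.integral_const, smul_eq_mul] at hm
        linarith [hm]
      have hWw : c * (W - w) = 1 := by
        rw [hwdef]; field_simp; ring
      have h1 := hφftc w W
      have h2 := (hrange w).2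
      have h3 := (hrange W).1
      nlinarith
  -- Step C: E z < 0
  have stepC : ∀ z, E z < 0 := by
    intro z
    have hex : ∃ w ≤ z, D w ≠ 0 := by
      by_contra h
      push_neg at h
      have hconst : ∀ᶠ w in atBot, φ₀ w = φ₀ z := by
        rw [eventually_atBot]
        refine ⟨z, fun w hw => ?_⟩
        have h1 := hφftc w z
        have h2 : ∫ x in w..z, D x = 0 := by
          rw [intervalIntegral.integral_congr (g := fun _ => (0:ℝ))
            (fun x hx => h x (by
              rcases Set.mem_uIcc.mp hx with ⟨_, h2⟩ | ⟨_, h2⟩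
              · exact h2
              · exact h2.trans hw))]
          simp
        linarith
      have : Tendsto φ₀ atBot (𝓝 (φ₀ z)) :=
        Tendsto.congr' (hconst.mono fun w hw => hw.symm) tendsto_const_nhds
      have h1 := tendsto_nhds_unique this hlim1
      exact absurd h1 (ne_of_lt (hrange z).2)
    obtain ⟨w, hwz, hw0⟩ := hex
    have hDw2 : 0 < D w ^ 2 := by positivity
    have hcont : ∀ᶠ x in 𝓝 w, D w ^ 2 / 2 < D x ^ 2 :=
      ((hDc.pow 2).continuousAt (x := w)).eventually (eventually_gt_nhds (by show D w ^ 2 / 2 < D w ^ 2; linarith))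
    obtain ⟨δ, hδ, hball⟩ := Metric.eventually_nhds_iff.mp hcont
    set r := min (δ / 2) 1 with hrdef
    have hr0 : 0 < r := lt_min (by linarith) one_pos
    have hr1 : r ≤ 1 := min_le_right _ _
    have hrδ : r < δ := lt_of_le_of_lt (min_le_left _ _) (by linarith)
    have hmid : r * (D w ^ 2 / 2) ≤ ∫ x in (w - r)..w, D x ^ 2 := by
      have hm := intervalIntegral.integral_mono_on (by linarith : w - r ≤ w)
        (intervalIntegrable_const : IntervalIntegrable (fun _ => D w ^ 2 / 2) volume (w - r) w)
        (hD2int (w - r) w)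
        (fun x hx => (hball (show dist x w < δ by
          rw [Real.dist_eq, abs_lt]
          constructor <;> linarith [hx.1, hx.2])).le)
      rw [intervalIntegral.integral_const, smul_eq_mul] at hm
      linarith
    have hsplit : ∫ z in (w-1)..z, D z ^ 2 =
        (∫ x in (w-1)..(w-r), D x ^ 2) + (∫ x in (w-r)..w, D x ^ 2) +
        (∫ x in w..z, D x ^ 2) := by
      rw [intervalIntegral.integral_add_adjacent_intervals (hD2int _ _) (hD2int _ _),
        intervalIntegral.integral_add_adjacent_intervals (hD2int _ _) (hD2int _ _)]
    have hnn1 : 0 ≤ ∫ x in (w-1)..(w-r), D x ^ 2 :=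
      intervalIntegral.integral_nonneg (by linarith) (fun x _ => sq_nonneg _)
    have hnn2 : 0 ≤ ∫ x in w..z, D x ^ 2 :=
      intervalIntegral.integral_nonneg hwz (fun x _ => sq_nonneg _)
    have hpos : 0 < ∫ x in (w-1)..z, D x ^ 2 := by
      rw [hsplit]
      have : 0 < r * (D w ^ 2 / 2) := by positivity
      linarith
    have h1 := hEftc (w - 1) z
    have h2 := stepB (w - 1)
    nlinarith
  -- Conclusion
  intro t ht
  show 0 < G t
  rcases eq_or_lt_of_le ht.1 with h0 | h0
  · have h1 := stepA 0
    have h2 := stepC 0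
    rw [← h0]
    linarith
  · -- find z with φ₀ z = t
    obtain ⟨a, ha⟩ : ∃ a, φ₀ a < t := (hlim0.eventually (eventually_lt_nhds h0)).exists
    obtain ⟨b, hb⟩ : ∃ b, t < φ₀ b := (hlim1.eventually (eventually_gt_nhds ht.2)).exists
    have hmem : t ∈ uIcc (φ₀ a) (φ₀ b) := by
      rw [Set.mem_uIcc]; left; exact ⟨ha.le, hb.le⟩
    obtain ⟨z, _, hz⟩ := intermediate_value_uIcc hφc.continuousOn hmem
    have h1 := stepC z
    rw [hEeq z] at h1
    have h2 : G (φ₀ z) = G t := by rw [hz]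
    nlinarith [sq_nonneg (D z)]
end

section
/- Suppose f ∈ C¹([0,1]), f(0) = f(1) = 0, and there exist c₀ > 0 and φ₀ ∈ C²(ℝ) solving φ₀'' + c₀φ₀' + f(φ₀) = 0 with φ₀(−∞) = 1 > φ₀ > φ₀(+∞) = 0. Then there exists θ ∈ (0,1) such that f > 0 on [θ, 1). -/
open Filter Topology

lemma deriv_differentiable_of_contDiff2 {h : ℝ → ℝ} (hh : ContDiff ℝ 2 h) :
    Differentiable ℝ (deriv h) := by
  have h2 : ContDiff ℝ ((1:ℕ∞)+1) h := by norm_num at hh ⊢; exact hh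
  exact (contDiff_succ_iff_deriv.mp h2).2.2.differentiable (by norm_num)

lemma second_deriv_nonneg_of_isLocalMin {h : ℝ → ℝ} (hh : ContDiff ℝ 2 h) {x : ℝ}
    (hx : IsLocalMin h x) : 0 ≤ deriv (deriv h) x := by
  by_contra hneg
  push_neg at hneg
  have hd1 : Differentiable ℝ h := hh.differentiable (by norm_num)
  have hd2 : Differentiable ℝ (deriv h) := deriv_differentiable_of_contDiff2 hh
  have h1 : deriv h x = 0 := hx.deriv_eq_zero
  have hslope : Tendsto (slope (deriv h) x) (𝓝[≠] x) (𝓝 (deriv (deriv h) x)) :=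
    hasDerivAt_iff_tendsto_slope.mp (hd2 x).hasDerivAt
  have hev : ∀ᶠ y in 𝓝[≠] x, slope (deriv h) x y < 0 :=
    hslope.eventually_lt_const hneg
  have hev' : ∀ᶠ y in 𝓝[>] x, deriv h y < 0 := by
    filter_upwards [nhdsWithin_mono x (fun y (hy : y ∈ Set.Ioi x) => ne_of_gt hy) hev,
      self_mem_nhdsWithin] with y hy (hy2 : x < y)
    have heq : slope (deriv h) x y = (deriv h y) / (y - x) := by
      rw [slope_def_field, h1]; ring
    rw [heq] at hy
    by_contra hcon
    push_neg at hcon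
    exact absurd (div_nonneg hcon (by linarith)) (not_le.mpr hy)
  obtain ⟨u, hu, hsub⟩ := mem_nhdsGT_iff_exists_Ioc_subset.mp hev'
  have hanti : StrictAntiOn h (Set.Icc x u) := by
    apply strictAntiOn_of_deriv_neg (convex_Icc x u) hd1.continuous.continuousOn
    intro y hy
    rw [interior_Icc] at hy
    exact hsub ⟨hy.1, le_of_lt hy.2⟩
  have hmin : ∀ᶠ y in 𝓝[>] x, h x ≤ h y := nhdsWithin_le_nhds hx
  have hIoc : Set.Ioc x u ∈ 𝓝[>] x := mem_nhdsGT_iff_exists_Ioc_subset.mpr ⟨u, hu, subset_rfl⟩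
  obtain ⟨y, hy1, hy2⟩ := (hmin.and (eventually_mem_set.mpr hIoc)).exists
  exact absurd hy1 (not_le.mpr (hanti ⟨le_refl x, le_of_lt (lt_of_lt_of_le hy2.1 hy2.2)⟩ ⟨le_of_lt hy2.1, hy2.2⟩ hy2.1))

lemma psi_hasDeriv (σ c₀ τ : ℝ) (z : ℝ) :
    HasDerivAt (fun z => σ + Real.exp (-(c₀/2)*(z-τ))) (-(c₀/2) * Real.exp (-(c₀/2)*(z-τ))) z := by
  have h1 : HasDerivAt (fun z : ℝ => -(c₀/2)*(z-τ)) (-(c₀/2)) z := by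
    simpa using (((hasDerivAt_id z).sub_const τ).const_mul (-(c₀/2)))
  simpa [mul_comm] using (h1.exp.const_add σ)

lemma touching_lemma (f : ℝ → ℝ) (c₀ : ℝ) (hc₀ : 0 < c₀)
    (φ₀ : ℝ → ℝ)
    (heq : ∀ z : ℝ, deriv (deriv φ₀) z + c₀ * deriv φ₀ z + f (φ₀ z) = 0)
    (hlim1 : Filter.Tendsto φ₀ Filter.atBot (nhds 1))
    (hlim0 : Filter.Tendsto φ₀ Filter.atTop (nhds 0))
    (hrange : ∀ z : ℝ, 0 < φ₀ z ∧ φ₀ z < 1)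
    (hcont : Continuous φ₀)
    (σ : ℝ) (hσ0 : 0 < σ) (hσ1 : σ < 1) :
    ∃ τstar : ℝ, (∀ z, φ₀ z ≤ σ + Real.exp (-(c₀/2)*(z-τstar))) ∧
      ∃ zstar, φ₀ zstar = σ + Real.exp (-(c₀/2)*(zstar-τstar)) := by
  have h1σ : (0:ℝ) < 1 - σ := by linarith
  set a : ℝ := -(2/c₀) * Real.log (1-σ) with ha
  -- key: z ≤ τ + a → 1 - σ ≤ exp(-(c₀/2)*(z-τ))
  have hkey : ∀ τ z : ℝ, z ≤ τ + a → 1 - σ ≤ Real.exp (-(c₀/2)*(z-τ)) := by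
    intro τ z hz
    rw [← Real.exp_log h1σ]
    apply Real.exp_le_exp.mpr
    have h2 : z - τ ≤ a := by linarith
    have : -(c₀/2) * (z - τ) ≥ -(c₀/2) * a := by
      apply mul_le_mul_of_nonpos_left h2 (by linarith)
    have haa : -(c₀/2) * a = Real.log (1-σ) := by
      rw [ha]; field_simp
    linarith
  -- Z : beyond Z, φ₀ < σ
  obtain ⟨Z, hZ⟩ : ∃ Z : ℝ, ∀ z ≥ Z, φ₀ z < σ := by
    have := hlim0.eventually_lt_const hσ0
    exact eventually_atTop.mp this
  -- z₁ with φ₀ z₁ > (1+σ)/2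
  obtain ⟨z₁, hz₁⟩ : ∃ z₁ : ℝ, (1+σ)/2 < φ₀ z₁ := by
    have := hlim1.eventually_const_lt (show (1+σ)/2 < 1 by linarith)
    exact this.exists
  set T : Set ℝ := ⋂ (z : ℝ), {τ : ℝ | φ₀ z ≤ σ + Real.exp (-(c₀/2)*(z-τ))} with hT
  have hmemT : ∀ τ, τ ∈ T ↔ ∀ z, φ₀ z ≤ σ + Real.exp (-(c₀/2)*(z-τ)) := by
    intro τ; simp [hT, Set.mem_iInter]
  have hTne : T.Nonempty := by
    refine ⟨Z - a, (hmemT _).mpr ?_⟩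
    intro z
    rcases le_or_gt z ((Z - a) + a) with hle | hlt
    · have := hkey (Z-a) z hle
      have := (hrange z).2
      linarith
    · have : φ₀ z < σ := hZ z (by linarith)
      have := (Real.exp_pos (-(c₀/2)*(z-(Z-a)))).le
      linarith
  have hTbdd : BddBelow T := by
    refine ⟨z₁ + (2/c₀) * Real.log ((1-σ)/2), ?_⟩
    intro τ hτ
    have h := (hmemT τ).mp hτ z₁
    have h2 : (1-σ)/2 < Real.exp (-(c₀/2)*(z₁-τ)) := by linarith
    have hpos : (0:ℝ) < (1-σ)/2 := by linarith
    have hel := Real.exp_log hpos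
    rw [← hel] at h2
    have h3 : Real.log ((1-σ)/2) < -(c₀/2)*(z₁-τ) := Real.exp_lt_exp.mp h2
    have h4 : (2/c₀) * Real.log ((1-σ)/2) < (2/c₀) * (-(c₀/2)*(z₁-τ)) := by
      apply mul_lt_mul_of_pos_left h3 (by positivity)
    have h5 : (2/c₀) * (-(c₀/2)*(z₁-τ)) = τ - z₁ := by field_simp; ring
    linarith
  have hTclosed : IsClosed T := by
    apply isClosed_iInter
    intro z
    apply isClosed_le continuous_const
    have : Continuous fun τ : ℝ => -(c₀/2)*(z-τ) := by continuity
    exact continuous_const.add (Real.continuous_exp.comp this)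
  set τs : ℝ := sInf T with hτs
  have hτsT : τs ∈ T := hTclosed.csInf_mem hTne hTbdd
  have hle : ∀ z, φ₀ z ≤ σ + Real.exp (-(c₀/2)*(z-τs)) := (hmemT τs).mp hτsT
  refine ⟨τs, hle, ?_⟩
  by_contra hno
  push_neg at hno
  have hlt : ∀ z, φ₀ z < σ + Real.exp (-(c₀/2)*(z-τs)) :=
    fun z => lt_of_le_of_ne (hle z) (hno z)
  set M : ℝ := max Z (τs - 1 + a) with hM
  set K : Set ℝ := Set.Icc (τs - 1 + a) M with hK
  have hKne : K.Nonempty := ⟨τs - 1 + a, le_refl _, le_max_right _ _⟩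
  set g : ℝ → ℝ := fun z => (σ + Real.exp (-(c₀/2)*(z-τs))) - φ₀ z with hg
  have hgcont : Continuous g := by
    apply Continuous.sub _ hcont
    exact continuous_const.add (Real.continuous_exp.comp
      (continuous_const.mul (continuous_id.sub continuous_const)))
  obtain ⟨zm, hzmK, hzmmin⟩ := isCompact_Icc.exists_isMinOn hKne hgcont.continuousOn
  set m : ℝ := g zm with hm
  have hmpos : 0 < m := by
    have := hlt zm; simp only [hm, hg]; linarith
  set C : ℝ := Real.exp (-(c₀/2)*(τs-1+a)) with hC
  have hCpos : 0 < C := Real.exp_pos _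
  have ht1 : Tendsto (fun τ => (Real.exp ((c₀/2)*τs) - Real.exp ((c₀/2)*τ)) * C)
      (𝓝[<] τs) (𝓝 0) := by
    have hco : Continuous (fun τ : ℝ => (Real.exp ((c₀/2)*τs) - Real.exp ((c₀/2)*τ)) * C) := by
      apply Continuous.mul _ continuous_const
      exact continuous_const.sub (Real.continuous_exp.comp (continuous_const.mul continuous_id))
    have h0 := hco.tendsto τs
    simp only [sub_self, zero_mul] at h0
    exact h0.mono_left nhdsWithin_le_nhds
  have hev : ∀ᶠ τ in 𝓝[<] τs,
      (Real.exp ((c₀/2)*τs) - Real.exp ((c₀/2)*τ)) * C < m := ht1.eventually_lt_const hmpos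
  have hev2 : ∀ᶠ τ in 𝓝[<] τs, τ ∈ Set.Ioo (τs - 1) τs :=
    eventually_mem_set.mpr (Ioo_mem_nhdsLT_of_mem ⟨by linarith, le_refl _⟩)
  obtain ⟨τ, hτ1, hτ2⟩ := (hev.and hev2).exists
  have hτT : τ ∈ T := by
    rw [hmemT]
    intro z
    rcases le_or_gt z (τ + a) with hcase1 | hcase1
    · have := hkey τ z hcase1
      have := (hrange z).2
      linarith
    · rcases le_or_gt Z z with hcase2 | hcase2
      · have := hZ z hcase2
        have := (Real.exp_pos (-(c₀/2)*(z-τ))).le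
        linarith
      · -- z ∈ K
        have hzK : z ∈ K := by
          constructor
          · have := hτ2.1; linarith
          · exact le_trans hcase2.le (le_max_left _ _)
        have hgz : m ≤ g z := hzmmin hzK
        set Δ : ℝ := Real.exp ((c₀/2)*τs) - Real.exp ((c₀/2)*τ) with hΔ
        have hΔnn : 0 ≤ Δ := by
          simp only [hΔ, sub_nonneg]
          exact Real.exp_le_exp.mpr (by nlinarith [hτ2.2.le, hc₀])
        have e1 : Real.exp (-(c₀/2)*(z-τ)) =
            Real.exp (-(c₀/2)*(z-τs)) - Real.exp (-(c₀/2)*z) * Δ := by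
          rw [hΔ, show -(c₀/2)*(z-τ) = -(c₀/2)*z + (c₀/2)*τ by ring,
            show -(c₀/2)*(z-τs) = -(c₀/2)*z + (c₀/2)*τs by ring,
            Real.exp_add, Real.exp_add]
          ring
        have e2 : Real.exp (-(c₀/2)*z) * Δ ≤ C * Δ := by
          apply mul_le_mul_of_nonneg_right _ hΔnn
          apply Real.exp_le_exp.mpr
          nlinarith [hzK.1, hc₀]
        have e3 : C * Δ < m := by rw [mul_comm]; exact hτ1
        simp only [hg] at hgz
        have hfin1 : φ₀ z ≤ σ + Real.exp (-(c₀/2)*(z-τs)) - m := by linarith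
        rw [e1]
        clear_value Δ C m τs
        linarith
  have : τs ≤ τ := csInf_le hTbdd hτT
  linarith [hτ2.2]

lemma psi_contDiff (σ c₀ τ : ℝ) :
    ContDiff ℝ 2 (fun z => σ + Real.exp (-(c₀/2)*(z-τ))) := by
  have h1 : ContDiff ℝ 2 (fun z : ℝ => -(c₀/2)*(z-τ)) :=
    ContDiff.mul contDiff_const (contDiff_id.sub contDiff_const)
  exact contDiff_const.add (Real.contDiff_exp.comp h1)

lemma touch_value (f : ℝ → ℝ) (c₀ : ℝ) (hc₀ : 0 < c₀)
    (φ₀ : ℝ → ℝ) (hφ : ContDiff ℝ 2 φ₀)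
    (heq : ∀ z : ℝ, deriv (deriv φ₀) z + c₀ * deriv φ₀ z + f (φ₀ z) = 0)
    (hlim1 : Filter.Tendsto φ₀ Filter.atBot (nhds 1))
    (hlim0 : Filter.Tendsto φ₀ Filter.atTop (nhds 0))
    (hrange : ∀ z : ℝ, 0 < φ₀ z ∧ φ₀ z < 1)
    (σ : ℝ) (hσ0 : 0 < σ) (hσ1 : σ < 1) :
    ∃ u, σ < u ∧ u < 1 ∧ c₀^2/4 * (u - σ) ≤ f u := by
  obtain ⟨τs, hle, zs, hzs⟩ := touching_lemma f c₀ hc₀ φ₀ heq hlim1 hlim0 hrange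
    hφ.continuous σ hσ0 hσ1
  set ψ : ℝ → ℝ := fun z => σ + Real.exp (-(c₀/2)*(z-τs)) with hψ
  set g : ℝ → ℝ := fun z => ψ z - φ₀ z with hgdef
  have hgC2 : ContDiff ℝ 2 g := (psi_contDiff σ c₀ τs).sub hφ
  have hgmin : IsLocalMin g zs := by
    apply Filter.Eventually.of_forall
    intro y
    simp only [hgdef, hψ]
    have h1 := hle y
    linarith [hzs]
  have hd1φ : Differentiable ℝ φ₀ := hφ.differentiable (by norm_num)
  have hd2φ : Differentiable ℝ (deriv φ₀) := deriv_differentiable_of_contDiff2 hφ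
  have hgd : ∀ z, HasDerivAt g (-(c₀/2) * Real.exp (-(c₀/2)*(z-τs)) - deriv φ₀ z) z :=
    fun z => (psi_hasDeriv σ c₀ τs z).sub (hd1φ z).hasDerivAt
  have hderivg : deriv g = fun z => -(c₀/2) * Real.exp (-(c₀/2)*(z-τs)) - deriv φ₀ z :=
    funext fun z => (hgd z).deriv
  have h1 : ∀ z : ℝ, HasDerivAt (fun z : ℝ => -(c₀/2)*(z-τs)) (-(c₀/2)) z := by
    intro z
    simpa using (((hasDerivAt_id z).sub_const τs).const_mul (-(c₀/2)))
  have hgd2 : HasDerivAt (deriv g)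
      ((Real.exp (-(c₀/2)*(zs-τs)) * (-(c₀/2))) * (-(c₀/2)) - deriv (deriv φ₀) zs) zs := by
    rw [hderivg]
    have hterm : HasDerivAt (fun z => -(c₀/2) * Real.exp (-(c₀/2)*(z-τs)))
        (-(c₀/2) * (Real.exp (-(c₀/2)*(zs-τs)) * (-(c₀/2)))) zs := ((h1 zs).exp).const_mul _
    have : HasDerivAt (fun z => -(c₀/2) * Real.exp (-(c₀/2)*(z-τs)) - deriv φ₀ z) _ zs :=
      hterm.sub (hd2φ zs).hasDerivAt
    convert this using 1
    ring
  have hD1 : deriv g zs = 0 := hgmin.deriv_eq_zero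
  have hD2 : 0 ≤ deriv (deriv g) zs := second_deriv_nonneg_of_isLocalMin hgC2 hgmin
  rw [hgd2.deriv] at hD2
  rw [hderivg] at hD1
  simp only at hD1
  set E : ℝ := Real.exp (-(c₀/2)*(zs-τs)) with hE
  have hEpos : 0 < E := Real.exp_pos _
  have hfe := heq zs
  refine ⟨φ₀ zs, by rw [hzs]; linarith, (hrange zs).2, ?_⟩
  have hda : deriv φ₀ zs = -(c₀/2) * E := by linarith
  have hdb : deriv (deriv φ₀) zs ≤ E * (c₀^2/4) := by nlinarith [hD2]
  have hu : φ₀ zs - σ = E := by rw [hzs]; ring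
  rw [hu]
  nlinarith [hfe, hda, hdb, hEpos]

/-- if the equation admits a traveling front connecting `1` to `0` with
positive speed `c₀`, then there exists `θ ∈ (0,1)` with `f > 0` on `[θ,1)`. -/
theorem f_pos_near_one_of_front (f : ℝ → ℝ) (hf : ContDiffOn ℝ 1 f (Set.Icc 0 1))
    (hf0 : f 0 = 0) (hf1 : f 1 = 0) (c₀ : ℝ) (hc₀ : 0 < c₀)
    (φ₀ : ℝ → ℝ) (hφ : ContDiff ℝ 2 φ₀)
    (heq : ∀ z : ℝ, deriv (deriv φ₀) z + c₀ * deriv φ₀ z + f (φ₀ z) = 0)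
    (hlim1 : Filter.Tendsto φ₀ Filter.atBot (nhds 1))
    (hlim0 : Filter.Tendsto φ₀ Filter.atTop (nhds 0))
    (hrange : ∀ z : ℝ, 0 < φ₀ z ∧ φ₀ z < 1) :
    ∃ θ ∈ Set.Ioo (0:ℝ) 1, ∀ s ∈ Set.Ico θ 1, 0 < f s := by
  by_contra hcon
  push_neg at hcon
  set g1 : ℝ → ℝ := derivWithin f (Set.Icc 0 1) with hg1
  have hUD : UniqueDiffOn ℝ (Set.Icc (0:ℝ) 1) := uniqueDiffOn_Icc (by norm_num)
  have hg1cont : ContinuousOn g1 (Set.Icc 0 1) :=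
    hf.continuousOn_derivWithin hUD le_rfl
  have h1mem : (1:ℝ) ∈ Set.Icc (0:ℝ) 1 := by norm_num
  have hg1at1 : ContinuousWithinAt g1 (Set.Icc 0 1) 1 := hg1cont 1 h1mem
  set μ : ℝ := g1 1 with hμdef
  -- deriv f = g1 on Ioo 0 1
  have hderiv_eq : ∀ x ∈ Set.Ioo (0:ℝ) 1, deriv f x = g1 x := by
    intro x hx
    rw [hg1, derivWithin_of_mem_nhds (Icc_mem_nhds hx.1 hx.2)]
  have hdiffIoo : ∀ x ∈ Set.Ioo (0:ℝ) 1, DifferentiableAt ℝ f x := by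
    intro x hx
    exact (hf.differentiableOn (by norm_num) x ⟨hx.1.le, hx.2.le⟩).differentiableAt
      (Icc_mem_nhds hx.1 hx.2)
  -- slope fact
  have hMVT : ∀ p q : ℝ, 0 < p → p < q → q ≤ 1 →
      ∃ c ∈ Set.Ioo p q, f q - f p = g1 c * (q - p) := by
    intro p q hp hpq hq1
    have hco : ContinuousOn f (Set.Icc p q) :=
      hf.continuousOn.mono (Set.Icc_subset_Icc hp.le hq1)
    have hdo : DifferentiableOn ℝ f (Set.Ioo p q) := by
      intro x hx
      have hx01 : x ∈ Set.Ioo (0:ℝ) 1 := ⟨lt_trans hp hx.1, lt_of_lt_of_le hx.2 hq1⟩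
      exact (hdiffIoo x hx01).differentiableWithinAt
    obtain ⟨c, hc, hslope⟩ := exists_deriv_eq_slope f hpq hco hdo
    refine ⟨c, hc, ?_⟩
    have hc01 : c ∈ Set.Ioo (0:ℝ) 1 := ⟨lt_trans hp hc.1, lt_of_lt_of_le hc.2 hq1⟩
    have hne : q - p ≠ 0 := sub_ne_zero.mpr (ne_of_gt hpq)
    rw [← hderiv_eq c hc01, hslope, div_mul_cancel₀ _ hne]
  rcases lt_or_ge μ (c₀^2/4) with hμ | hμ
  · -- Case A
    set k : ℝ := (μ + c₀^2/4)/2 with hk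
    have hμk : μ < k := by rw [hk]; linarith
    have hkc : k < c₀^2/4 := by rw [hk]; linarith
    obtain ⟨δ, hδpos, hδ⟩ := Metric.continuousWithinAt_iff.mp hg1at1 (k - μ) (by linarith)
    set θ : ℝ := max (1 - δ/2) (1/2) with hθ
    have hθ0 : 0 < θ := lt_of_lt_of_le (by norm_num) (le_max_right _ _)
    have hθ1 : θ < 1 := by
      apply max_lt (by linarith) (by norm_num)
    have hg1k : ∀ u ∈ Set.Icc θ 1, g1 u < k := by
      intro u hu
      have hu01 : u ∈ Set.Icc (0:ℝ) 1 := ⟨le_trans hθ0.le hu.1, hu.2⟩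
      have hdist : dist u 1 < δ := by
        rw [Real.dist_eq, abs_sub_lt_iff]
        have := hu.1
        have h3 := hu.2
        have h2 : 1 - δ/2 ≤ θ := le_max_left _ _
        constructor <;> [linarith; linarith]
      have := hδ hu01 hdist
      rw [Real.dist_eq, abs_sub_lt_iff] at this
      have := this.1
      linarith
    obtain ⟨σ, hσmem, hσf⟩ := hcon θ ⟨hθ0, hθ1⟩
    have hσ0 : 0 < σ := lt_of_lt_of_le hθ0 hσmem.1
    obtain ⟨u, hσu, hu1, hfu⟩ := touch_value f c₀ hc₀ φ₀ hφ heq hlim1 hlim0 hrange σ hσ0 hσmem.2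
    obtain ⟨c, hc, hslope⟩ := hMVT σ u hσ0 hσu hu1.le
    have hcθ : c ∈ Set.Icc θ 1 := ⟨le_trans hσmem.1 hc.1.le, le_trans hc.2.le hu1.le⟩
    have hkc2 := hg1k c hcθ
    nlinarith [hfu, hσf, hslope, hσu, hkc2]
  · -- Case B : μ ≥ c₀²/4 > 0
    have hμpos : 0 < μ := lt_of_lt_of_le (by positivity) hμ
    obtain ⟨δ, hδpos, hδ⟩ := Metric.continuousWithinAt_iff.mp hg1at1 (μ/2) (by linarith)
    set θ : ℝ := max (1 - δ/2) (1/2) with hθ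
    have hθ0 : 0 < θ := lt_of_lt_of_le (by norm_num) (le_max_right _ _)
    have hθ1 : θ < 1 := max_lt (by linarith) (by norm_num)
    have hg1k : ∀ u ∈ Set.Icc θ 1, 0 < g1 u := by
      intro u hu
      have hu01 : u ∈ Set.Icc (0:ℝ) 1 := ⟨le_trans hθ0.le hu.1, hu.2⟩
      have hdist : dist u 1 < δ := by
        rw [Real.dist_eq, abs_sub_lt_iff]
        have := hu.1
        have h3 := hu.2
        have h2 : 1 - δ/2 ≤ θ := le_max_left _ _
        constructor <;> [linarith; linarith]
      have := hδ hu01 hdist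
      rw [Real.dist_eq, abs_sub_lt_iff] at this
      have := this.1
      linarith
    obtain ⟨u, hσu, hu1, hfu⟩ := touch_value f c₀ hc₀ φ₀ hφ heq hlim1 hlim0 hrange θ hθ0 hθ1
    have hfupos : 0 < f u :=
      lt_of_lt_of_le (mul_pos (by positivity) (by linarith : (0:ℝ) < u - θ)) hfu
    obtain ⟨c, hc, hslope⟩ := hMVT u 1 (lt_trans hθ0 hσu) hu1 le_rfl
    have hcθ : c ∈ Set.Icc θ 1 := ⟨le_trans hσu.le hc.1.le, hc.2.le⟩
    have := hg1k c hcθ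
    rw [hf1] at hslope
    nlinarith [hslope, hfupos, hc.2]
end
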